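/- arXiv:2305.08798 — 2 statements merged into one kernel-verified Lean document; each statement's English description precedes it below -/
import Mathlib

section
/- Let ℓ≥2 be an integer, R a commutative ring with unity, ∘ ∈ {0,−}, and (I,{J,K}) ∈ P̃•([ℓ]) with min(J∪K)∈J. For every p ∈ R_{0,[ℓ]} there exists q ∈ R_{0,{nd}⊔I} ⊗_R R^{cx}_{{nd}⊔(J∪K)} such that ℝD̃^∘_{I;J,K}·(F(p) − F(F_{I;J,K}(q))) ∈ I_{0,[ℓ+1]}; that is, ℝD̃^∘_{I;J,K}·(Im F) ⊆ ℝD̃^∘_{I;J,K}·(Im(F∘F_{I;J,K})) + I_{0,[ℓ+1]}. -/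
open MvPolynomial Finset TensorProduct

noncomputable section

/-- `[ℓ] = {1, …, ℓ}`. -/
abbrev Iset (n : ℕ) : Finset ℕ := Finset.Icc 1 n

/-! ### The "complex" rings `R_S = R[(D_{J,K})_{{J,K} ∈ P•(S)}]`.
An unordered pair `{J,K}` with `J ⊔ K = S` and `2 ≤ |J| ≤ |S|-2` is represented by
its unique member containing `min S`. -/

/-- Index type for the variables `D_{J,K}`, `{J,K} ∈ P•(S)`: the canonical member
of the pair is the one whose minimum is `min S`. -/
abbrev CxIdx (S : Finset ℕ) : Type :=
  {J : Finset ℕ // J ⊆ S ∧ 2 ≤ J.card ∧ 2 ≤ (S \ J).card ∧ J.min = S.min}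

/-- The polynomial ring `R_S` on the variables `D_{J,K}`, `{J,K} ∈ P•(S)`. -/
abbrev CxRing (R : Type) [CommRing R] (S : Finset ℕ) : Type := MvPolynomial (CxIdx S) R

def cxXv (R : Type) [CommRing R] (S J : Finset ℕ) : CxRing R S :=
  if h : J ⊆ S ∧ 2 ≤ J.card ∧ 2 ≤ (S \ J).card ∧ J.min = S.min then X ⟨J, h⟩ else 0

/-- The variable `D_{J,K}` of `R_S` (equal to `0` if `{J,K} ∉ P•(S)`). -/
def cxD (R : Type) [CommRing R] (S J K : Finset ℕ) : CxRing R S :=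
  if Disjoint J K ∧ J ∪ K = S then (if J.min ≤ K.min then cxXv R S J else cxXv R S K)
  else 0

/-- `{J,K} ⋂̸ {J',K'}`:  `J ⊄ J'`, `J ⊄ K'`, `J' ⊄ J` and `K' ⊄ J`. -/
abbrev NcapCx (J J' K' : Finset ℕ) : Prop :=
  ¬ J ⊆ J' ∧ ¬ J ⊆ K' ∧ ¬ J' ⊆ J ∧ ¬ K' ⊆ J

/-- The element `R^S_{abcd}`. -/
def cxRel (R : Type) [CommRing R] (S : Finset ℕ) (a b c d : ℕ) : CxRing R S :=
  (∑ J ∈ S.powerset,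
    if 2 ≤ J.card ∧ 2 ≤ (S \ J).card ∧ a ∈ J ∧ b ∈ J ∧ c ∈ S \ J ∧ d ∈ S \ J
    then cxD R S J (S \ J) else 0)
  - ∑ J ∈ S.powerset,
    if 2 ≤ J.card ∧ 2 ≤ (S \ J).card ∧ a ∈ J ∧ c ∈ J ∧ b ∈ S \ J ∧ d ∈ S \ J
    then cxD R S J (S \ J) else 0

/-- The ideal `I_S ⊂ R_S`. -/
def cxIdeal (R : Type) [CommRing R] (S : Finset ℕ) : Ideal (CxRing R S) :=
  Ideal.span (
    {x | ∃ J K J' K' : Finset ℕ,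
      (Disjoint J K ∧ J ∪ K = S ∧ 2 ≤ J.card ∧ 2 ≤ K.card) ∧
      (Disjoint J' K' ∧ J' ∪ K' = S ∧ 2 ≤ J'.card ∧ 2 ≤ K'.card) ∧
      NcapCx J J' K' ∧ x = cxD R S J K * cxD R S J' K'} ∪
    {x | ∃ a b c d : ℕ, a ∈ S ∧ b ∈ S ∧ c ∈ S ∧ d ∈ S ∧ a ≠ b ∧ c ≠ d ∧
      x = cxRel R S a b c d})

/-- The homomorphism `F : R_{[ℓ]} → R_{[ℓ+1]}`, `D_{J,K} ↦ D_{J∪{ℓ+1},K} + D_{J,K∪{ℓ+1}}`. -/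
def Fcx (R : Type) [CommRing R] (ℓ : ℕ) : CxRing R (Iset ℓ) →ₐ[R] CxRing R (Iset (ℓ + 1)) :=
  aeval fun i =>
    cxD R (Iset (ℓ + 1)) (i.1 ∪ {ℓ + 1}) (Iset ℓ \ i.1)
    + cxD R (Iset (ℓ + 1)) i.1 ((Iset ℓ \ i.1) ∪ {ℓ + 1})

/-- The homomorphism `F_P : R_{{nd}⊔B} → R_{[ℓ]}`, `D_{J',K'} ↦ D_{P∪(J'-{nd}),K'}` for
`nd ∈ J'`; here `nd = 0`. -/
def FJcx (R : Type) [CommRing R] (ℓ : ℕ) (P B : Finset ℕ) :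
    CxRing R (insert 0 B) →ₐ[R] CxRing R (Iset ℓ) :=
  aeval fun i => cxD R (Iset ℓ) (P ∪ i.1.erase 0) (insert 0 B \ i.1)

/-- The homomorphism `F_{J,K} : R_{{nd}⊔J} ⊗ R_{{nd}⊔K} → R_{[ℓ]}` acting by `F_K` on the
first factor and by `F_J` on the second. -/
def FJKcx (R : Type) [CommRing R] (ℓ : ℕ) (J K : Finset ℕ) :
    TensorProduct R (CxRing R (insert 0 J)) (CxRing R (insert 0 K)) →ₐ[R] CxRing R (Iset ℓ) :=
  Algebra.TensorProduct.productMap (FJcx R ℓ K J) (FJcx R ℓ J K)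

/-- The submodule `A ⊗ I_B + I_A ⊗ B` of `A ⊗_R B`. -/
def mixedSub (R : Type) [CommRing R] {A B : Type} [CommRing A] [CommRing B]
    [Algebra R A] [Algebra R B] (IA : Ideal A) (IB : Ideal B) :
    Submodule R (TensorProduct R A B) :=
  Submodule.span R
    ({x | ∃ p q, q ∈ IB ∧ x = p ⊗ₜ[R] q} ∪ {x | ∃ p q, p ∈ IA ∧ x = p ⊗ₜ[R] q})

/-! ### The "real" rings `R_{0,S}` with variables `ℝE_{J,K}`, `{J,K} ∈ P(S)`, and
`ℝD_{I;J,K}`, `(I,{J,K}) ∈ P̃•(S)`.  The unordered pair `{J,K}` is represented by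
its member whose minimum equals the minimum of `J ∪ K`. -/

abbrev EIdx (S : Finset ℕ) : Type := {J : Finset ℕ // J ⊆ S ∧ J.min = S.min}

abbrev DIdx (S : Finset ℕ) : Type :=
  {p : Finset ℕ × Finset ℕ //
    p.1 ⊆ S ∧ p.2 ⊆ S \ p.1 ∧ 1 ≤ p.1.card ∧ 2 ≤ (S \ p.1).card ∧ p.2.min = (S \ p.1).min}

/-- The polynomial ring `R_{0,S}`. -/
abbrev RRing (R : Type) [CommRing R] (S : Finset ℕ) : Type :=
  MvPolynomial (EIdx S ⊕ DIdx S) R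

def reXe (R : Type) [CommRing R] (S J : Finset ℕ) : RRing R S :=
  if h : J ⊆ S ∧ J.min = S.min then X (Sum.inl ⟨J, h⟩) else 0

/-- The variable `ℝE_{J,K}` of `R_{0,S}` (equal to `0` if `{J,K} ∉ P(S)`). -/
def reE (R : Type) [CommRing R] (S J K : Finset ℕ) : RRing R S :=
  if Disjoint J K ∧ J ∪ K = S then (if J.min ≤ K.min then reXe R S J else reXe R S K)
  else 0

def reXd (R : Type) [CommRing R] (S I J : Finset ℕ) : RRing R S :=
  if h : I ⊆ S ∧ J ⊆ S \ I ∧ 1 ≤ I.card ∧ 2 ≤ (S \ I).card ∧ J.min = (S \ I).min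
  then X (Sum.inr ⟨(I, J), h⟩) else 0

/-- The variable `ℝD_{I;J,K}` of `R_{0,S}` (equal to `0` if `(I,{J,K}) ∉ P̃•(S)`). -/
def reD (R : Type) [CommRing R] (S I J K : Finset ℕ) : RRing R S :=
  if Disjoint I (J ∪ K) ∧ Disjoint J K ∧ I ∪ (J ∪ K) = S then
    (if J.min ≤ K.min then reXd R S I J else reXd R S I K)
  else 0

/-- The sign `ε_{J,K}`: `1` if `min (J ∪ K) ∈ J` and `-1` otherwise. -/
def epsm (J K : Finset ℕ) : ℤ := if J.min ≤ K.min then 1 else -1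

/-- `{J,K} ⪯ {J',K'}`. -/
abbrev preceq (J K J' K' : Finset ℕ) : Prop := (J ⊆ J' ∧ K ⊆ K') ∨ (J ⊆ K' ∧ K ⊆ J')

/-- `{J,K} ∈ P(S)`. -/
abbrev validE (S J K : Finset ℕ) : Prop := Disjoint J K ∧ J ∪ K = S

/-- `(I,{J,K}) ∈ P̃•(S)`. -/
abbrev validD (S I J K : Finset ℕ) : Prop :=
  Disjoint I (J ∪ K) ∧ Disjoint J K ∧ I ∪ (J ∪ K) = S ∧ 1 ≤ I.card ∧ 2 ≤ (J ∪ K).card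

/-- The element `E^S_{abc}`. -/
def relE (R : Type) [CommRing R] (S : Finset ℕ) (a b c : ℕ) : RRing R S :=
  (∑ I ∈ S.powerset, ∑ J ∈ (S \ I).powerset,
    if 1 ≤ I.card ∧ 2 ≤ (S \ I).card ∧ a ∈ J ∧ b ∈ J ∧ c ∈ I
    then epsm J ((S \ I) \ J) • reD R S I J ((S \ I) \ J) else 0)
  - (∑ I ∈ S.powerset, ∑ J ∈ (S \ I).powerset,
    if 1 ≤ I.card ∧ 2 ≤ (S \ I).card ∧ a ∈ J ∧ c ∈ J ∧ b ∈ I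
    then epsm J ((S \ I) \ J) • reD R S I J ((S \ I) \ J) else 0)
  - ∑ I ∈ S.powerset, ∑ J ∈ (S \ I).powerset,
    if 1 ≤ I.card ∧ 2 ≤ (S \ I).card ∧ a ∈ I ∧ b ∈ J ∧ c ∈ (S \ I) \ J
    then epsm J ((S \ I) \ J) • reD R S I J ((S \ I) \ J) else 0

/-- The element `Σ_{{J,K} ∈ P(S)} ℝE_{J,K}`. -/
def relEsum (R : Type) [CommRing R] (S : Finset ℕ) : RRing R S :=
  ∑ J ∈ S.powerset.filter (fun J => J.min = S.min), reE R S J (S \ J)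

/-- The ideal `I_{0,S} ⊂ R_{0,S}`. -/
def reIdeal (R : Type) [CommRing R] (S : Finset ℕ) : Ideal (RRing R S) :=
  Ideal.span (
    {x | ∃ J K J' K' : Finset ℕ, validE S J K ∧ validE S J' K' ∧
      x = reE R S J K * reE R S J' K'} ∪
    {x | ∃ J K I' J' K' : Finset ℕ, validE S J K ∧ validD S I' J' K' ∧
      ¬ preceq J' K' J K ∧ x = reE R S J K * reD R S I' J' K'} ∪
    {x | ∃ I J K I' J' K' : Finset ℕ, validD S I J K ∧ validD S I' J' K' ∧
      ¬ preceq J K J' K' ∧ ¬ preceq J' K' J K ∧ ¬ J ∪ K ⊆ I' ∧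
      x = reD R S I J K * reD R S I' J' K'} ∪
    {relEsum R S} ∪
    {x | ∃ a b c : ℕ, a ∈ S ∧ b ∈ S ∧ c ∈ S ∧ a ≠ b ∧ a ≠ c ∧ b ≠ c ∧
      x = relE R S a b c})

/-- The element `G_{abc}` of Remark `RcM04rel_e2b2`. -/
def relG (R : Type) [CommRing R] (S : Finset ℕ) (a b c : ℕ) : RRing R S :=
  (∑ I ∈ S.powerset, ∑ J ∈ (S \ I).powerset,
    if 1 ≤ I.card ∧ 2 ≤ (S \ I).card ∧ a ∈ J ∧ b ∉ I ∧ c ∈ I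
    then epsm J ((S \ I) \ J) • reD R S I J ((S \ I) \ J) else 0)
  - ∑ I ∈ S.powerset, ∑ J ∈ (S \ I).powerset,
    if 1 ≤ I.card ∧ 2 ≤ (S \ I).card ∧ a ∈ J ∧ b ∈ I ∧ c ∉ I
    then epsm J ((S \ I) \ J) • reD R S I J ((S \ I) \ J) else 0

/-- The homomorphism `F : R_{0,[ℓ]} → R_{0,[ℓ+1]}`. -/
def Fre (R : Type) [CommRing R] (ℓ : ℕ) : RRing R (Iset ℓ) →ₐ[R] RRing R (Iset (ℓ + 1)) :=
  aeval fun ix =>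
    match ix with
    | Sum.inl e =>
        reE R (Iset (ℓ + 1)) (e.1 ∪ {ℓ + 1}) (Iset ℓ \ e.1)
        + reE R (Iset (ℓ + 1)) e.1 ((Iset ℓ \ e.1) ∪ {ℓ + 1})
    | Sum.inr d =>
        reD R (Iset (ℓ + 1)) (d.1.1 ∪ {ℓ + 1}) d.1.2 ((Iset ℓ \ d.1.1) \ d.1.2)
        + reD R (Iset (ℓ + 1)) d.1.1 (d.1.2 ∪ {ℓ + 1}) ((Iset ℓ \ d.1.1) \ d.1.2)
        + reD R (Iset (ℓ + 1)) d.1.1 d.1.2 (((Iset ℓ \ d.1.1) \ d.1.2) ∪ {ℓ + 1})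

/-- `ℝẼ⁰_{J,K} = ℝD_{{ℓ+1};J,K} ∈ R_{0,[ℓ+1]}`. -/
def reEt0 (R : Type) [CommRing R] (ℓ : ℕ) (J K : Finset ℕ) : RRing R (Iset (ℓ + 1)) :=
  reD R (Iset (ℓ + 1)) {ℓ + 1} J K

/-- `ℝẼ⁻_{J,K} = ℝE_{J,K∪{ℓ+1}} ∈ R_{0,[ℓ+1]}`. -/
def reEtm (R : Type) [CommRing R] (ℓ : ℕ) (J K : Finset ℕ) : RRing R (Iset (ℓ + 1)) :=
  reE R (Iset (ℓ + 1)) J (K ∪ {ℓ + 1})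

/-- `ℝD̃⁰_{I;J,K} ∈ R_{0,[ℓ+1]}` (for `(I,{J,K})` written with `min (J∪K) ∈ J`). -/
def reDt0 (R : Type) [CommRing R] (ℓ : ℕ) (I J K : Finset ℕ) : RRing R (Iset (ℓ + 1)) :=
  if 1 ∈ I then reD R (Iset (ℓ + 1)) I (J ∪ {ℓ + 1}) K
  else reD R (Iset (ℓ + 1)) (I ∪ {ℓ + 1}) J K

/-- `ℝD̃⁻_{I;J,K} = ℝD_{I;J,K∪{ℓ+1}} ∈ R_{0,[ℓ+1]}`. -/
def reDtm (R : Type) [CommRing R] (ℓ : ℕ) (I J K : Finset ℕ) : RRing R (Iset (ℓ + 1)) :=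
  reD R (Iset (ℓ + 1)) I J (K ∪ {ℓ + 1})

/-- The homomorphism `F_{J,K} : R^{cx}_{{nd}⊔[ℓ]} → R_{0,[ℓ]}`,
`D_{J',K'} ↦ (-1)^{|K|} ε_{J∩K',K∩K'} ℝD_{J'-{nd};J∩K',K∩K'}` for `nd ∈ J'`; here `nd = 0`. -/
def FJKre (R : Type) [CommRing R] (ℓ : ℕ) (J K : Finset ℕ) :
    CxRing R (insert 0 (Iset ℓ)) →ₐ[R] RRing R (Iset ℓ) :=
  aeval fun i =>
    ((-1 : ℤ) ^ K.card *
        epsm (J ∩ (insert 0 (Iset ℓ) \ i.1)) (K ∩ (insert 0 (Iset ℓ) \ i.1))) •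
      reD R (Iset ℓ) (i.1.erase 0)
        (J ∩ (insert 0 (Iset ℓ) \ i.1)) (K ∩ (insert 0 (Iset ℓ) \ i.1))

/-- The homomorphism `F²_{I;J,K} : R^{cx}_{{nd}⊔(J∪K)} → R_{0,[ℓ]}`,
`D_{J',K'} ↦ (-1)^{|K|} ε_{J∩K',K∩K'} ℝD_{I∪(J'-{nd});J∩K',K∩K'}` for `nd ∈ J'`;
here `nd = 0`. -/
def F2IJK (R : Type) [CommRing R] (ℓ : ℕ) (I J K : Finset ℕ) :
    CxRing R (insert 0 (J ∪ K)) →ₐ[R] RRing R (Iset ℓ) :=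
  aeval fun i =>
    ((-1 : ℤ) ^ K.card *
        epsm (J ∩ (insert 0 (J ∪ K) \ i.1)) (K ∩ (insert 0 (J ∪ K) \ i.1))) •
      reD R (Iset ℓ) (I ∪ i.1.erase 0)
        (J ∩ (insert 0 (J ∪ K) \ i.1)) (K ∩ (insert 0 (J ∪ K) \ i.1))

/-- `nd` for `{nd} ⊔ I`, identified with `min (ℤ⁺ - I)`. -/
def ndOf (I : Finset ℕ) : ℕ := sInf {n : ℕ | 0 < n ∧ n ∉ I}

/-- The homomorphism `F¹_{I;J,K} : R_{0,{nd}⊔I} → R_{0,[ℓ]}` with `nd = min (ℤ⁺ - I)`. -/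
def F1IJK (R : Type) [CommRing R] (ℓ : ℕ) (I J K : Finset ℕ) :
    RRing R (insert (ndOf I) I) →ₐ[R] RRing R (Iset ℓ) :=
  aeval fun ix =>
    match ix with
    | Sum.inl e =>
        if ndOf I ∈ e.1 then
          reE R (Iset ℓ) (J ∪ e.1.erase (ndOf I)) (K ∪ (insert (ndOf I) I \ e.1))
        else
          reE R (Iset ℓ) (J ∪ (insert (ndOf I) I \ e.1).erase (ndOf I)) (K ∪ e.1)
    | Sum.inr d =>
        if ndOf I ∈ d.1.1 then
          reD R (Iset ℓ) (d.1.1.erase (ndOf I) ∪ J ∪ K) d.1.2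
            ((insert (ndOf I) I \ d.1.1) \ d.1.2)
        else if ndOf I ∈ d.1.2 then
          reD R (Iset ℓ) d.1.1 (J ∪ d.1.2.erase (ndOf I))
            (K ∪ ((insert (ndOf I) I \ d.1.1) \ d.1.2))
        else
          reD R (Iset ℓ) d.1.1
            (J ∪ ((insert (ndOf I) I \ d.1.1) \ d.1.2).erase (ndOf I)) (K ∪ d.1.2)

/-- The homomorphism `F_{I;J,K} : R_{0,{nd}⊔I} ⊗ R^{cx}_{{nd}⊔(J∪K)} → R_{0,[ℓ]}`
induced by `F¹_{I;J,K}` and `F²_{I;J,K}`. -/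
def FIJK (R : Type) [CommRing R] (ℓ : ℕ) (I J K : Finset ℕ) :
    TensorProduct R (RRing R (insert (ndOf I) I)) (CxRing R (insert 0 (J ∪ K))) →ₐ[R]
      RRing R (Iset ℓ) :=
  Algebra.TensorProduct.productMap (F1IJK R ℓ I J K) (F2IJK R ℓ I J K)

/-! ### Auxiliary lemmas for Statement 14 -/

namespace Stmt14Aux

open Finset

lemma usin (n : ℕ) (A : Finset ℕ) : A ∪ {n} = insert n A := by
  rw [Finset.insert_eq, Finset.union_comm]

lemma min_disj {A B : Finset ℕ} (hd : Disjoint A B) (he : A.min = B.min) : A = ∅ := by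
  rcases Finset.eq_empty_or_nonempty A with h | h
  · exact h
  · exfalso
    obtain ⟨a, ha⟩ := h
    have h1 : A.min ≠ ⊤ := by
      intro ht
      rw [Finset.min_eq_top] at ht
      simp [ht] at ha
    obtain ⟨a₀, ha₀⟩ := Option.ne_none_iff_exists'.1 h1
    have hmA : a₀ ∈ A := Finset.mem_of_min ha₀
    have hmB : a₀ ∈ B := Finset.mem_of_min (he ▸ ha₀)
    exact Finset.disjoint_left.1 hd hmA hmB

variable (R : Type) [CommRing R]

lemma reE_symm (S A B : Finset ℕ) : reE R S A B = reE R S B A := by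
  unfold reE
  by_cases h : Disjoint A B ∧ A ∪ B = S
  · have h' : Disjoint B A ∧ B ∪ A = S := ⟨h.1.symm, by rw [Finset.union_comm]; exact h.2⟩
    rw [if_pos h, if_pos h']
    rcases lt_trichotomy A.min B.min with hlt | heq | hlt
    · rw [if_pos hlt.le, if_neg (not_le.2 hlt)]
    · have hA : A = ∅ := min_disj h.1 heq
      have hB : B = ∅ := min_disj h.1.symm heq.symm
      rw [hA, hB]
    · rw [if_neg (not_le.2 hlt), if_pos hlt.le]
  · have h' : ¬ (Disjoint B A ∧ B ∪ A = S) := by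
      rw [disjoint_comm, Finset.union_comm]; exact h
    rw [if_neg h, if_neg h']

lemma reD_symm (S C A B : Finset ℕ) : reD R S C A B = reD R S C B A := by
  unfold reD
  by_cases h : Disjoint C (A ∪ B) ∧ Disjoint A B ∧ C ∪ (A ∪ B) = S
  · have h' : Disjoint C (B ∪ A) ∧ Disjoint B A ∧ C ∪ (B ∪ A) = S := by
      rw [Finset.union_comm B A]
      exact ⟨h.1, h.2.1.symm, h.2.2⟩
    rw [if_pos h, if_pos h']
    rcases lt_trichotomy A.min B.min with hlt | heq | hlt
    · rw [if_pos hlt.le, if_neg (not_le.2 hlt)]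
    · have hA : A = ∅ := min_disj h.2.1 heq
      have hB : B = ∅ := min_disj h.2.1.symm heq.symm
      rw [hA, hB]
    · rw [if_neg (not_le.2 hlt), if_pos hlt.le]
  · have h' : ¬ (Disjoint C (B ∪ A) ∧ Disjoint B A ∧ C ∪ (B ∪ A) = S) := by
      rw [Finset.union_comm B A, disjoint_comm (a := B)]
      exact h
    rw [if_neg h, if_neg h']

lemma reE_eq_X {S A B : Finset ℕ} (hd : Disjoint A B) (hu : A ∪ B = S)
    (h : A ⊆ S ∧ A.min = S.min) : reE R S A B = X (Sum.inl ⟨A, h⟩) := by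
  have hAB : A.min ≤ B.min := by
    have h2 : S.min = A.min ⊓ B.min := by rw [← hu, Finset.min_union]
    calc A.min = A.min ⊓ B.min := by rw [← h2, h.2]
    _ ≤ B.min := inf_le_right
  unfold reE reXe
  rw [if_pos ⟨hd, hu⟩, if_pos hAB, dif_pos h]

lemma reD_eq_X {S C A B : Finset ℕ} (h1 : Disjoint C (A ∪ B)) (h2 : Disjoint A B)
    (h3 : C ∪ (A ∪ B) = S)
    (h : C ⊆ S ∧ A ⊆ S \ C ∧ 1 ≤ C.card ∧ 2 ≤ (S \ C).card ∧ A.min = (S \ C).min) :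
    reD R S C A B = X (Sum.inr ⟨(C, A), h⟩) := by
  have hsd : S \ C = A ∪ B := by
    rw [← h3, Finset.union_sdiff_cancel_left h1]
  have hAB : A.min ≤ B.min := by
    have h4 : (S \ C).min = A.min ⊓ B.min := by rw [hsd, Finset.min_union]
    calc A.min = A.min ⊓ B.min := by rw [← h4, h.2.2.2.2]
    _ ≤ B.min := inf_le_right
  unfold reD reXd
  rw [if_pos ⟨h1, h2, h3⟩, if_pos hAB, dif_pos h]

lemma X_as_reE {S : Finset ℕ} (e : EIdx S) :
    (X (Sum.inl e) : RRing R S) = reE R S e.1 (S \ e.1) := by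
  rw [reE_eq_X R (Finset.disjoint_sdiff) (Finset.union_sdiff_of_subset e.2.1) e.2]

lemma X_as_reD {S : Finset ℕ} (d : DIdx S) :
    (X (Sum.inr d) : RRing R S) = reD R S d.1.1 d.1.2 ((S \ d.1.1) \ d.1.2) := by
  have h2 : d.1.2 ⊆ S \ d.1.1 := d.2.2.1
  have hu : d.1.2 ∪ ((S \ d.1.1) \ d.1.2) = S \ d.1.1 := Finset.union_sdiff_of_subset h2
  rw [reD_eq_X R ?h1 Finset.disjoint_sdiff ?h3 ⟨d.2.1, d.2.2.1, d.2.2.2.1, d.2.2.2.2.1, ?hmin⟩]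
  case h1 => rw [hu]; exact Finset.disjoint_sdiff
  case h3 => rw [hu, Finset.union_sdiff_of_subset d.2.1]
  case hmin => exact d.2.2.2.2.2


/-! #### epsm and min helpers -/

lemma min_le_coe_of_mem {A : Finset ℕ} {a : ℕ} (h : a ∈ A) : A.min ≤ (a : WithTop ℕ) :=
  Finset.min_le h

lemma min_lt_top_of_nonempty {A : Finset ℕ} (h : A.Nonempty) : A.min ≠ ⊤ := by
  intro ht; rw [Finset.min_eq_top] at ht; simp [ht] at h

lemma min_le_n {A : Finset ℕ} {n : ℕ} (hA : A.Nonempty) (h : ∀ a ∈ A, a < n) :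
    A.min ≤ (n : WithTop ℕ) := by
  obtain ⟨a, ha⟩ := Finset.min_of_nonempty hA
  rw [ha]
  simpa using (h a (Finset.mem_of_min ha)).le

lemma min_insert_eq {A : Finset ℕ} {n : ℕ} (hA : A.Nonempty) (h : ∀ a ∈ A, a < n) :
    (insert n A).min = A.min := by
  refine le_antisymm (Finset.min_mono (Finset.subset_insert _ _)) (Finset.le_min ?_)
  intro a ha
  rcases Finset.mem_insert.1 ha with rfl | ha
  · exact min_le_n hA h
  · exact Finset.min_le ha

lemma epsm_insert_left {A B : Finset ℕ} {n : ℕ} (hA : A.Nonempty) (h : ∀ a ∈ A, a < n) :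
    epsm (insert n A) B = epsm A B := by
  unfold epsm
  rw [min_insert_eq hA h]

lemma epsm_insert_right {A B : Finset ℕ} {n : ℕ} (hA : A.Nonempty) (h : ∀ a ∈ A, a < n) :
    epsm A (insert n B) = epsm A B := by
  unfold epsm
  have hiff : A.min ≤ (insert n B).min ↔ A.min ≤ B.min := by
    constructor
    · intro h'
      exact le_trans h' (Finset.min_mono (Finset.subset_insert _ _))
    · intro h'
      refine Finset.le_min ?_
      intro a ha
      rcases Finset.mem_insert.1 ha with rfl | ha
      · exact min_le_n hA h
      · exact le_trans h' (Finset.min_le ha)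
  simp only [hiff]

lemma epsm_mul_self (A B : Finset ℕ) : epsm A B * epsm A B = 1 := by
  unfold epsm; split <;> ring

lemma epsm_smul_epsm_smul {M : Type*} [AddCommGroup M] (A B : Finset ℕ) (x : M) :
    epsm A B • epsm A B • x = x := by
  rw [smul_smul, epsm_mul_self, one_smul]

/-! #### `Fre` on the canonical generators -/

variable (ℓ : ℕ)

lemma n_not_mem_S {x : ℕ} (hx : x ∈ Iset ℓ) : x ≠ ℓ + 1 := by
  simp only [Iset, Finset.mem_Icc] at hx; omega

lemma n_notin_S : (ℓ + 1) ∉ Iset ℓ := fun h => n_not_mem_S ℓ h rfl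

lemma Sp_eq : Iset (ℓ + 1) = insert (ℓ + 1) (Iset ℓ) := by
  ext x; simp only [Iset, Finset.mem_Icc, Finset.mem_insert]; omega

lemma lt_n_of_mem_S {x : ℕ} (hx : x ∈ Iset ℓ) : x < ℓ + 1 := by
  simp only [Iset, Finset.mem_Icc] at hx; omega

lemma Fre_X_inl (e : EIdx (Iset ℓ)) :
    Fre R ℓ (X (Sum.inl e)) =
      reE R (Iset (ℓ + 1)) (e.1 ∪ {ℓ + 1}) (Iset ℓ \ e.1)
      + reE R (Iset (ℓ + 1)) e.1 ((Iset ℓ \ e.1) ∪ {ℓ + 1}) := by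
  simp [Fre, aeval_X]

lemma Fre_X_inr (d : DIdx (Iset ℓ)) :
    Fre R ℓ (X (Sum.inr d)) =
      reD R (Iset (ℓ + 1)) (d.1.1 ∪ {ℓ + 1}) d.1.2 ((Iset ℓ \ d.1.1) \ d.1.2)
      + reD R (Iset (ℓ + 1)) d.1.1 (d.1.2 ∪ {ℓ + 1}) ((Iset ℓ \ d.1.1) \ d.1.2)
      + reD R (Iset (ℓ + 1)) d.1.1 d.1.2 (((Iset ℓ \ d.1.1) \ d.1.2) ∪ {ℓ + 1}) := by
  simp [Fre, aeval_X]

lemma Fre_reE_aux {A B : Finset ℕ} (hd : Disjoint A B) (hu : A ∪ B = Iset ℓ)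
    (hm : A.min ≤ B.min) (hA : A.Nonempty) :
    Fre R ℓ (reE R (Iset ℓ) A B) =
      reE R (Iset (ℓ + 1)) (A ∪ {ℓ + 1}) B + reE R (Iset (ℓ + 1)) A (B ∪ {ℓ + 1}) := by
  have hsub : A ⊆ Iset ℓ := hu ▸ Finset.subset_union_left
  have hminA : A.min = (Iset ℓ).min := by
    rw [← hu, Finset.min_union, inf_eq_left.2 hm]
  rw [reE_eq_X R hd hu ⟨hsub, hminA⟩, Fre_X_inl]
  have hBd : Iset ℓ \ A = B := by rw [← hu, Finset.union_sdiff_cancel_left hd]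
  rw [hBd]

lemma Fre_reE {A B : Finset ℕ} (hd : Disjoint A B) (hu : A ∪ B = Iset ℓ) (hl : 1 ≤ ℓ) :
    Fre R ℓ (reE R (Iset ℓ) A B) =
      reE R (Iset (ℓ + 1)) (A ∪ {ℓ + 1}) B + reE R (Iset (ℓ + 1)) A (B ∪ {ℓ + 1}) := by
  rcases le_or_gt A.min B.min with hm | hm
  · rcases Finset.eq_empty_or_nonempty A with hA | hA
    · exfalso
      have hB : B = ∅ := by
        rw [← Finset.min_eq_top]
        have : A.min = ⊤ := by rw [hA]; rfl
        exact top_le_iff.1 (this ▸ hm)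
      have : (1 : ℕ) ∈ Iset ℓ := by simp [Iset]; omega
      rw [← hu, hA, hB] at this; simp at this
    · exact Fre_reE_aux R ℓ hd hu hm hA
  · have hB : B.Nonempty := by
      rw [Finset.nonempty_iff_ne_empty]
      intro h
      rw [h, Finset.min_empty] at hm
      exact absurd hm (by simp)
    rw [reE_symm]
    rw [Fre_reE_aux R ℓ hd.symm (by rw [Finset.union_comm]; exact hu) hm.le hB]
    rw [reE_symm R _ (B ∪ {ℓ+1}) A, reE_symm R _ B (A ∪ {ℓ+1})]
    exact add_comm _ _

lemma Fre_reD_aux {C A B : Finset ℕ} (h1 : Disjoint C (A ∪ B)) (h2 : Disjoint A B)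
    (h3 : C ∪ (A ∪ B) = Iset ℓ) (hC : 1 ≤ C.card) (hAB : 2 ≤ (A ∪ B).card)
    (hm : A.min ≤ B.min) (hA : A.Nonempty) :
    Fre R ℓ (reD R (Iset ℓ) C A B) =
      reD R (Iset (ℓ + 1)) (C ∪ {ℓ + 1}) A B
      + reD R (Iset (ℓ + 1)) C (A ∪ {ℓ + 1}) B
      + reD R (Iset (ℓ + 1)) C A (B ∪ {ℓ + 1}) := by
  have hsd : Iset ℓ \ C = A ∪ B := by
    rw [← h3, Finset.union_sdiff_cancel_left h1]
  have hh : C ⊆ Iset ℓ ∧ A ⊆ Iset ℓ \ C ∧ 1 ≤ C.card ∧ 2 ≤ (Iset ℓ \ C).card ∧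
      A.min = (Iset ℓ \ C).min := by
    refine ⟨h3 ▸ Finset.subset_union_left, ?_, hC, ?_, ?_⟩
    · rw [hsd]; exact Finset.subset_union_left
    · rw [hsd]; exact hAB
    · rw [hsd, Finset.min_union, inf_eq_left.2 hm]
  rw [reD_eq_X R h1 h2 h3 hh, Fre_X_inr]
  have hB : (Iset ℓ \ C) \ A = B := by rw [hsd, Finset.union_sdiff_cancel_left h2]
  rw [hB]

lemma Fre_reD {C A B : Finset ℕ} (h1 : Disjoint C (A ∪ B)) (h2 : Disjoint A B)
    (h3 : C ∪ (A ∪ B) = Iset ℓ) (hC : 1 ≤ C.card) (hAB : 2 ≤ (A ∪ B).card) :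
    Fre R ℓ (reD R (Iset ℓ) C A B) =
      reD R (Iset (ℓ + 1)) (C ∪ {ℓ + 1}) A B
      + reD R (Iset (ℓ + 1)) C (A ∪ {ℓ + 1}) B
      + reD R (Iset (ℓ + 1)) C A (B ∪ {ℓ + 1}) := by
  rcases le_or_gt A.min B.min with hm | hm
  · have hA : A.Nonempty := by
      rw [Finset.nonempty_iff_ne_empty]
      intro h
      rw [h, Finset.min_empty, top_le_iff, Finset.min_eq_top] at hm
      rw [h, hm] at hAB
      simp at hAB
    exact Fre_reD_aux R ℓ h1 h2 h3 hC hAB hm hA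
  · have hB : B.Nonempty := by
      rw [Finset.nonempty_iff_ne_empty]
      intro h
      rw [h, Finset.min_empty] at hm
      exact absurd hm (by simp)
    have hu' : B ∪ A = A ∪ B := Finset.union_comm _ _
    rw [reD_symm]
    rw [Fre_reD_aux R ℓ (hu' ▸ h1) h2.symm (hu' ▸ h3) hC (hu' ▸ hAB) hm.le hB]
    rw [reD_symm R _ (C ∪ {ℓ+1}) B A, reD_symm R _ C (B ∪ {ℓ+1}) A,
      reD_symm R _ C B (A ∪ {ℓ+1})]
    ring

/-! #### `Fre` maps the relations `E_{abc}` to the corresponding relations upstairs -/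

lemma ins_sdiff_ins {n : ℕ} {T U : Finset ℕ} (hn : n ∉ T) :
    (insert n T) \ (insert n U) = T \ U := by
  ext x
  simp only [Finset.mem_sdiff, Finset.mem_insert]
  constructor
  · rintro ⟨hx | hx, h2⟩
    · exact absurd (Or.inl hx) h2
    · exact ⟨hx, fun h => h2 (Or.inr h)⟩
  · rintro ⟨h1, h2⟩
    refine ⟨Or.inr h1, ?_⟩
    rintro (rfl | h)
    · exact hn h1
    · exact h2 h

lemma ins_sdiff {n : ℕ} {T U : Finset ℕ} (hn : n ∉ U) :
    (insert n T) \ U = insert n (T \ U) := by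
  ext x
  simp only [Finset.mem_sdiff, Finset.mem_insert]
  constructor
  · rintro ⟨hx | hx, h2⟩
    · exact Or.inl hx
    · exact Or.inr ⟨hx, h2⟩
  · rintro (rfl | ⟨h1, h2⟩)
    · exact ⟨Or.inl rfl, hn⟩
    · exact ⟨Or.inr h1, h2⟩

/-- The basic building block of `relE`. -/
def psum (S : Finset ℕ) (u : ℕ) (V W : Finset ℕ) : RRing R S :=
  ∑ I' ∈ S.powerset, ∑ J' ∈ (S \ I').powerset,
    if 1 ≤ I'.card ∧ 2 ≤ (S \ I').card ∧ u ∈ I' ∧ V ⊆ J' ∧ W ⊆ (S \ I') \ J'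
    then epsm J' ((S \ I') \ J') • reD R S I' J' ((S \ I') \ J') else 0

lemma Fre_psum (u : ℕ) (V W : Finset ℕ) (hu : u ∈ Iset ℓ) (hV : V ⊆ Iset ℓ)
    (hW : W ⊆ Iset ℓ) (hVne : V.Nonempty) (hcard : 2 ≤ (V ∪ W).card)
    (huVW : u ∉ V ∪ W) :
    Fre R ℓ (psum R (Iset ℓ) u V W) = psum R (Iset (ℓ + 1)) u V W := by
  have hnS : (ℓ + 1) ∉ Iset ℓ := n_notin_S ℓ
  set G : Finset ℕ → Finset ℕ → RRing R (Iset (ℓ+1)) := fun I' J' =>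
    if 1 ≤ I'.card ∧ 2 ≤ (Iset (ℓ+1) \ I').card ∧ u ∈ I' ∧ V ⊆ J' ∧
        W ⊆ (Iset (ℓ+1) \ I') \ J'
    then epsm J' ((Iset (ℓ+1) \ I') \ J') • reD R (Iset (ℓ+1)) I' J' ((Iset (ℓ+1) \ I') \ J')
    else 0 with hG
  have hinj : ∀ T ∈ (Iset ℓ).powerset, ∀ T' ∈ (Iset ℓ).powerset,
      insert (ℓ+1) T = insert (ℓ+1) T' → T = T' := by
    intro T hT T' hT' h
    have h1 : (ℓ+1) ∉ T := fun hh => hnS (Finset.mem_powerset.1 hT hh)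
    have h2 : (ℓ+1) ∉ T' := fun hh => hnS (Finset.mem_powerset.1 hT' hh)
    rw [← Finset.erase_insert h1, ← Finset.erase_insert h2, h]
  -- right hand side restructuring
  have hps : psum R (Iset (ℓ+1)) u V W =
      ∑ I' ∈ (Iset ℓ).powerset, (∑ J' ∈ (Iset ℓ \ I').powerset, G I' J'
        + ∑ J' ∈ (Iset ℓ \ I').powerset, G I' (insert (ℓ+1) J'))
      + ∑ I' ∈ (Iset ℓ).powerset, ∑ J' ∈ (Iset ℓ \ I').powerset, G (insert (ℓ+1) I') J' := by
    have hps0 : psum R (Iset (ℓ+1)) u V W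
        = ∑ I' ∈ (Iset (ℓ+1)).powerset, ∑ J' ∈ ((Iset (ℓ+1)) \ I').powerset, G I' J' := rfl
    have hd1 : Disjoint (Iset ℓ).powerset ((Iset ℓ).powerset.image (insert (ℓ+1))) := by
      rw [Finset.disjoint_left]
      intro T hT hT2
      obtain ⟨T', _, hT'⟩ := Finset.mem_image.1 hT2
      have : (ℓ+1) ∈ T := by rw [← hT']; exact Finset.mem_insert_self _ _
      exact hnS (Finset.mem_powerset.1 hT this)
    have hpows : (Iset (ℓ+1)).powerset
        = (Iset ℓ).powerset ∪ ((Iset ℓ).powerset.image (insert (ℓ+1))) := by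
      rw [Sp_eq, Finset.powerset_insert]
    rw [hps0]
    rw [Finset.sum_congr hpows (fun _ _ => rfl), Finset.sum_union hd1, Finset.sum_image hinj]
    congr 1
    · -- the part where (ℓ+1) ∉ I' : split the inner sum
      apply Finset.sum_congr rfl
      intro I' hI'
      have hnI' : (ℓ+1) ∉ I' := fun hh => hnS (Finset.mem_powerset.1 hI' hh)
      have hsd : Iset (ℓ+1) \ I' = insert (ℓ+1) (Iset ℓ \ I') := by
        rw [Sp_eq]; exact ins_sdiff hnI'
      have hd2 : Disjoint (Iset ℓ \ I').powerset
          ((Iset ℓ \ I').powerset.image (insert (ℓ+1))) := by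
        rw [Finset.disjoint_left]
        intro T hT hT2
        obtain ⟨T', _, hT'⟩ := Finset.mem_image.1 hT2
        have : (ℓ+1) ∈ T := by rw [← hT']; exact Finset.mem_insert_self _ _
        exact hnS (Finset.mem_sdiff.1 (Finset.mem_powerset.1 hT this)).1
      have hinj2 : ∀ T ∈ (Iset ℓ \ I').powerset, ∀ T' ∈ (Iset ℓ \ I').powerset,
          insert (ℓ+1) T = insert (ℓ+1) T' → T = T' := by
        intro T hT T' hT' h
        have h1 : (ℓ+1) ∉ T := fun hh =>
          hnS (Finset.mem_sdiff.1 (Finset.mem_powerset.1 hT hh)).1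
        have h2 : (ℓ+1) ∉ T' := fun hh =>
          hnS (Finset.mem_sdiff.1 (Finset.mem_powerset.1 hT' hh)).1
        rw [← Finset.erase_insert h1, ← Finset.erase_insert h2, h]
      have hpows2 : (Iset (ℓ+1) \ I').powerset
          = (Iset ℓ \ I').powerset ∪ ((Iset ℓ \ I').powerset.image (insert (ℓ+1))) := by
        rw [hsd, Finset.powerset_insert]
      rw [Finset.sum_congr hpows2 (fun _ _ => rfl), Finset.sum_union hd2,
        Finset.sum_image hinj2]
    · apply Finset.sum_congr rfl
      intro I' hI'
      have hsd : Iset (ℓ+1) \ insert (ℓ+1) I' = Iset ℓ \ I' := by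
        rw [Sp_eq]; exact ins_sdiff_ins hnS
      exact Finset.sum_congr (by rw [hsd]) (fun _ _ => rfl)
  rw [hps]
  simp only [psum]
  rw [map_sum, ← Finset.sum_add_distrib]
  refine Finset.sum_congr rfl ?_
  intro I' hI'
  rw [map_sum, ← Finset.sum_add_distrib, ← Finset.sum_add_distrib]
  refine Finset.sum_congr rfl ?_
  intro J' hJ'
  -- per-term identity
  have hI'S : I' ⊆ Iset ℓ := Finset.mem_powerset.1 hI'
  have hJ'S : J' ⊆ Iset ℓ \ I' := Finset.mem_powerset.1 hJ'
  have hnI' : (ℓ+1) ∉ I' := fun hh => hnS (hI'S hh)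
  have hnJ' : (ℓ+1) ∉ J' := fun hh => hnS ((Finset.mem_sdiff.1 (hJ'S hh)).1)
  have hnV : (ℓ+1) ∉ V := fun hh => hnS (hV hh)
  have hnW : (ℓ+1) ∉ W := fun hh => hnS (hW hh)
  have hsd1 : Iset (ℓ+1) \ insert (ℓ+1) I' = Iset ℓ \ I' := by
    rw [Sp_eq]; exact ins_sdiff_ins hnS
  have hsd2 : Iset (ℓ+1) \ I' = insert (ℓ+1) (Iset ℓ \ I') := by
    rw [Sp_eq]; exact ins_sdiff hnI'
  have hsd3 : insert (ℓ+1) (Iset ℓ \ I') \ insert (ℓ+1) J' = (Iset ℓ \ I') \ J' :=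
    ins_sdiff_ins (fun hh => hnS (Finset.mem_sdiff.1 hh).1)
  have hsd4 : insert (ℓ+1) (Iset ℓ \ I') \ J' = insert (ℓ+1) ((Iset ℓ \ I') \ J') :=
    ins_sdiff hnJ'
  by_cases hc : 1 ≤ I'.card ∧ 2 ≤ (Iset ℓ \ I').card ∧ u ∈ I' ∧ V ⊆ J' ∧
      W ⊆ (Iset ℓ \ I') \ J'
  · obtain ⟨h1, h2, h3, h4, h5⟩ := hc
    have hJne : J'.Nonempty := hVne.mono h4
    have hJlt : ∀ a ∈ J', a < ℓ + 1 := fun a ha =>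
      lt_n_of_mem_S ℓ ((Finset.mem_sdiff.1 (hJ'S ha)).1)
    have hc3 : 1 ≤ I'.card ∧ 2 ≤ (Iset (ℓ+1) \ I').card ∧ u ∈ I' ∧ V ⊆ J' ∧
        W ⊆ (Iset (ℓ+1) \ I') \ J' := by
      refine ⟨h1, ?_, h3, h4, ?_⟩
      · rw [hsd2, Finset.card_insert_of_notMem (fun hh => hnS (Finset.mem_sdiff.1 hh).1)]
        omega
      · rw [hsd2, hsd4]
        exact h5.trans (Finset.subset_insert _ _)
    have hc2 : 1 ≤ I'.card ∧ 2 ≤ (Iset (ℓ+1) \ I').card ∧ u ∈ I' ∧ V ⊆ insert (ℓ+1) J' ∧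
        W ⊆ (Iset (ℓ+1) \ I') \ insert (ℓ+1) J' := by
      refine ⟨h1, hc3.2.1, h3, h4.trans (Finset.subset_insert _ _), ?_⟩
      rw [hsd2, hsd3]
      exact h5
    have hc1 : 1 ≤ (insert (ℓ+1) I').card ∧ 2 ≤ (Iset (ℓ+1) \ insert (ℓ+1) I').card ∧
        u ∈ insert (ℓ+1) I' ∧ V ⊆ J' ∧ W ⊆ (Iset (ℓ+1) \ insert (ℓ+1) I') \ J' := by
      refine ⟨?_, ?_, Finset.mem_insert_of_mem h3, h4, ?_⟩
      · rw [Finset.card_insert_of_notMem hnI']; omega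
      · rw [hsd1]; exact h2
      · rw [hsd1]; exact h5
    have hcc : 1 ≤ I'.card ∧ 2 ≤ (Iset ℓ \ I').card ∧ u ∈ I' ∧ V ⊆ J' ∧
        W ⊆ (Iset ℓ \ I') \ J' := ⟨h1, h2, h3, h4, h5⟩
    simp only [hG]
    rw [if_pos hcc, if_pos hc1, if_pos hc2, if_pos hc3]
    rw [hsd1, hsd2, hsd3, hsd4]
    rw [epsm_insert_left hJne hJlt, epsm_insert_right hJne hJlt]
    rw [map_zsmul]
    have hdisjIJK : Disjoint I' (J' ∪ ((Iset ℓ \ I') \ J')) := by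
      rw [Finset.union_sdiff_of_subset hJ'S]
      exact Finset.disjoint_sdiff
    have hdisjJK : Disjoint J' ((Iset ℓ \ I') \ J') := Finset.disjoint_sdiff
    have hpart : I' ∪ (J' ∪ ((Iset ℓ \ I') \ J')) = Iset ℓ := by
      rw [Finset.union_sdiff_of_subset hJ'S, Finset.union_sdiff_of_subset hI'S]
    have hcard2 : 2 ≤ (J' ∪ ((Iset ℓ \ I') \ J')).card := by
      rw [Finset.union_sdiff_of_subset hJ'S]; exact h2
    rw [Fre_reD R ℓ hdisjIJK hdisjJK hpart h1 hcard2]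
    rw [usin, usin, usin]
    rw [smul_add, smul_add]
    abel
  · have hVWsub : V ⊆ J' → W ⊆ (Iset ℓ \ I') \ J' → 2 ≤ (Iset ℓ \ I').card := by
      intro g4 g5
      have hVW : V ∪ W ⊆ Iset ℓ \ I' :=
        Finset.union_subset (g4.trans hJ'S) (g5.trans Finset.sdiff_subset)
      calc 2 ≤ (V ∪ W).card := hcard
      _ ≤ (Iset ℓ \ I').card := Finset.card_le_card hVW
    have hc1 : ¬ (1 ≤ (insert (ℓ+1) I').card ∧ 2 ≤ (Iset (ℓ+1) \ insert (ℓ+1) I').card ∧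
        u ∈ insert (ℓ+1) I' ∧ V ⊆ J' ∧ W ⊆ (Iset (ℓ+1) \ insert (ℓ+1) I') \ J') := by
      rintro ⟨g1, g2, g3, g4, g5⟩
      have hu' : u ∈ I' := by
        rcases Finset.mem_insert.1 g3 with rfl | h
        · exact absurd hu hnS
        · exact h
      rw [hsd1] at g2 g5
      exact hc ⟨Finset.card_pos.2 ⟨u, hu'⟩, g2, hu', g4, g5⟩
    have hc2 : ¬ (1 ≤ I'.card ∧ 2 ≤ (Iset (ℓ+1) \ I').card ∧ u ∈ I' ∧
        V ⊆ insert (ℓ+1) J' ∧ W ⊆ (Iset (ℓ+1) \ I') \ insert (ℓ+1) J') := by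
      rintro ⟨g1, g2, g3, g4, g5⟩
      rw [hsd2, hsd3] at g5
      rw [Finset.subset_insert_iff_of_notMem hnV] at g4
      exact hc ⟨g1, hVWsub g4 g5, g3, g4, g5⟩
    have hc3 : ¬ (1 ≤ I'.card ∧ 2 ≤ (Iset (ℓ+1) \ I').card ∧ u ∈ I' ∧ V ⊆ J' ∧
        W ⊆ (Iset (ℓ+1) \ I') \ J') := by
      rintro ⟨g1, g2, g3, g4, g5⟩
      rw [hsd2, hsd4] at g5
      rw [Finset.subset_insert_iff_of_notMem hnW] at g5
      exact hc ⟨g1, hVWsub g4 g5, g3, g4, g5⟩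
    simp only [hG]
    rw [if_neg hc, if_neg hc1, if_neg hc2, if_neg hc3]
    simp

lemma psum_cond1 (S : Finset ℕ) (a b c : ℕ) :
    psum R S c {a, b} ∅ =
      ∑ I ∈ S.powerset, ∑ J ∈ (S \ I).powerset,
        if 1 ≤ I.card ∧ 2 ≤ (S \ I).card ∧ a ∈ J ∧ b ∈ J ∧ c ∈ I
        then epsm J ((S \ I) \ J) • reD R S I J ((S \ I) \ J) else 0 := by
  unfold psum
  refine Finset.sum_congr rfl fun I' _ => Finset.sum_congr rfl fun J' _ =>
    if_congr ?_ rfl rfl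
  simp only [Finset.insert_subset_iff, Finset.singleton_subset_iff, Finset.empty_subset,
    and_true]
  tauto

lemma psum_cond2 (S : Finset ℕ) (a b c : ℕ) :
    psum R S b {a, c} ∅ =
      ∑ I ∈ S.powerset, ∑ J ∈ (S \ I).powerset,
        if 1 ≤ I.card ∧ 2 ≤ (S \ I).card ∧ a ∈ J ∧ c ∈ J ∧ b ∈ I
        then epsm J ((S \ I) \ J) • reD R S I J ((S \ I) \ J) else 0 := by
  unfold psum
  refine Finset.sum_congr rfl fun I' _ => Finset.sum_congr rfl fun J' _ =>
    if_congr ?_ rfl rfl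
  simp only [Finset.insert_subset_iff, Finset.singleton_subset_iff, Finset.empty_subset,
    and_true]
  tauto

lemma psum_cond3 (S : Finset ℕ) (a b c : ℕ) :
    psum R S a {b} {c} =
      ∑ I ∈ S.powerset, ∑ J ∈ (S \ I).powerset,
        if 1 ≤ I.card ∧ 2 ≤ (S \ I).card ∧ a ∈ I ∧ b ∈ J ∧ c ∈ (S \ I) \ J
        then epsm J ((S \ I) \ J) • reD R S I J ((S \ I) \ J) else 0 := by
  unfold psum
  refine Finset.sum_congr rfl fun I' _ => Finset.sum_congr rfl fun J' _ =>
    if_congr ?_ rfl rfl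
  simp only [Finset.singleton_subset_iff]

lemma relE_eq_psum (S : Finset ℕ) (a b c : ℕ) :
    relE R S a b c =
      psum R S c {a, b} ∅ - psum R S b {a, c} ∅ - psum R S a {b} {c} := by
  rw [psum_cond1, psum_cond2, psum_cond3]
  rfl

lemma Fre_relE {a b c : ℕ} (ha : a ∈ Iset ℓ) (hb : b ∈ Iset ℓ) (hc : c ∈ Iset ℓ)
    (hab : a ≠ b) (hac : a ≠ c) (hbc : b ≠ c) :
    Fre R ℓ (relE R (Iset ℓ) a b c) = relE R (Iset (ℓ + 1)) a b c := by
  rw [relE_eq_psum, relE_eq_psum]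
  rw [map_sub, map_sub]
  rw [Fre_psum R ℓ c {a, b} ∅ hc (by simp [Finset.insert_subset_iff, ha, hb])
      (Finset.empty_subset _) ⟨a, by simp⟩
      (by rw [Finset.union_empty, Finset.card_insert_of_notMem (by simp [hab])]; simp)
      (by simp only [Finset.union_empty, Finset.mem_insert, Finset.mem_singleton]
          push_neg; exact ⟨hac.symm, hbc.symm⟩),
    Fre_psum R ℓ b {a, c} ∅ hb (by simp [Finset.insert_subset_iff, ha, hc])
      (Finset.empty_subset _) ⟨a, by simp⟩
      (by rw [Finset.union_empty, Finset.card_insert_of_notMem (by simp [hac])]; simp)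
      (by simp only [Finset.union_empty, Finset.mem_insert, Finset.mem_singleton]
          push_neg; exact ⟨hab.symm, hbc⟩),
    Fre_psum R ℓ a {b} {c} ha (by simp [hb]) (by simp [hc]) ⟨b, by simp⟩
      (by rw [Finset.card_union_of_disjoint (by simp [hbc, hbc.symm])]; simp)
      (by simp only [Finset.mem_union, Finset.mem_singleton]
          push_neg; exact ⟨hab, hac⟩)]

/-! #### Ideal membership of the generators -/

lemma mem_ideal_ED {S P Q C' A' B' : Finset ℕ} (h1 : validE S P Q) (h2 : validD S C' A' B')
    (h3 : ¬ preceq A' B' P Q) :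
    reE R S P Q * reD R S C' A' B' ∈ reIdeal R S := by
  apply Ideal.subset_span
  exact Set.mem_union_left _ (Set.mem_union_left _ (Set.mem_union_left _
    (Set.mem_union_right _ ⟨P, Q, C', A', B', h1, h2, h3, rfl⟩)))

lemma mem_ideal_DD {S C A B C' A' B' : Finset ℕ} (h1 : validD S C A B)
    (h2 : validD S C' A' B') (h3 : ¬ preceq A B A' B') (h4 : ¬ preceq A' B' A B)
    (h5 : ¬ A ∪ B ⊆ C') :
    reD R S C A B * reD R S C' A' B' ∈ reIdeal R S := by
  apply Ideal.subset_span
  exact Set.mem_union_left _ (Set.mem_union_left _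
    (Set.mem_union_right _ ⟨C, A, B, C', A', B', h1, h2, h3, h4, h5, rfl⟩))

lemma mem_ideal_relE {S : Finset ℕ} {a b c : ℕ} (ha : a ∈ S) (hb : b ∈ S) (hc : c ∈ S)
    (hab : a ≠ b) (hac : a ≠ c) (hbc : b ≠ c) :
    relE R S a b c ∈ reIdeal R S := by
  apply Ideal.subset_span
  exact Set.mem_union_right _ ⟨a, b, c, ha, hb, hc, hab, hac, hbc, rfl⟩

/-! #### `ndOf` and application lemmas for the maps -/

lemma ndOf_pos (I : Finset ℕ) : 0 < ndOf I ∧ ndOf I ∉ I := by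
  have h : {n : ℕ | 0 < n ∧ n ∉ I}.Nonempty := by
    refine ⟨I.sup id + 1, Nat.succ_pos _, fun h => ?_⟩
    have := Finset.le_sup (f := id) h
    exact Nat.not_succ_le_self _ this
  exact Nat.sInf_mem h

variable {ℓ : ℕ} {I J K : Finset ℕ}

lemma FIJK_inl (x : RRing R (insert (ndOf I) I)) :
    FIJK R ℓ I J K (x ⊗ₜ[R] 1) = F1IJK R ℓ I J K x := by
  unfold FIJK
  rw [Algebra.TensorProduct.productMap_apply_tmul, map_one, mul_one]

lemma FIJK_inr (y : CxRing R (insert 0 (J ∪ K))) :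
    FIJK R ℓ I J K ((1 : RRing R (insert (ndOf I) I)) ⊗ₜ[R] y) = F2IJK R ℓ I J K y := by
  unfold FIJK
  rw [Algebra.TensorProduct.productMap_apply_tmul, map_one, one_mul]

lemma F1_inl (e : EIdx (insert (ndOf I) I)) :
    F1IJK R ℓ I J K (X (Sum.inl e)) =
      if ndOf I ∈ e.1 then
        reE R (Iset ℓ) (J ∪ e.1.erase (ndOf I)) (K ∪ (insert (ndOf I) I \ e.1))
      else
        reE R (Iset ℓ) (J ∪ (insert (ndOf I) I \ e.1).erase (ndOf I)) (K ∪ e.1) := by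
  simp only [F1IJK, aeval_X]

lemma F1_inr (d : DIdx (insert (ndOf I) I)) :
    F1IJK R ℓ I J K (X (Sum.inr d)) =
      if ndOf I ∈ d.1.1 then
        reD R (Iset ℓ) (d.1.1.erase (ndOf I) ∪ J ∪ K) d.1.2
          ((insert (ndOf I) I \ d.1.1) \ d.1.2)
      else if ndOf I ∈ d.1.2 then
        reD R (Iset ℓ) d.1.1 (J ∪ d.1.2.erase (ndOf I))
          (K ∪ ((insert (ndOf I) I \ d.1.1) \ d.1.2))
      else
        reD R (Iset ℓ) d.1.1
          (J ∪ ((insert (ndOf I) I \ d.1.1) \ d.1.2).erase (ndOf I)) (K ∪ d.1.2) := by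
  simp only [F1IJK, aeval_X]

lemma F2_X (j : CxIdx (insert 0 (J ∪ K))) :
    F2IJK R ℓ I J K (X j) =
      ((-1 : ℤ) ^ K.card *
          epsm (J ∩ (insert 0 (J ∪ K) \ j.1)) (K ∩ (insert 0 (J ∪ K) \ j.1))) •
        reD R (Iset ℓ) (I ∪ j.1.erase 0)
          (J ∩ (insert 0 (J ∪ K) \ j.1)) (K ∩ (insert 0 (J ∪ K) \ j.1)) := by
  simp only [F2IJK, aeval_X]

/-! #### Set helpers -/

lemma inter_compl {I A B : Finset ℕ} (hsub : I ⊆ A ∪ B) (hd : Disjoint A B) :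
    I \ (A ∩ I) = B ∩ I := by
  ext x
  simp only [Finset.mem_sdiff, Finset.mem_inter]
  constructor
  · rintro ⟨hxI, hx⟩
    rcases Finset.mem_union.1 (hsub hxI) with h | h
    · exact absurd ⟨h, hxI⟩ hx
    · exact ⟨h, hxI⟩
  · rintro ⟨hxB, hxI⟩
    refine ⟨hxI, ?_⟩
    rintro ⟨hxA, -⟩
    exact Finset.disjoint_left.1 hd hxA hxB

lemma decompA {I J K A B : Finset ℕ} (hU : I ∪ (J ∪ K) = A ∪ B) (hd : Disjoint A B)
    (hJA : J ⊆ A) (hKB : K ⊆ B) : A = J ∪ (A ∩ I) := by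
  ext x
  simp only [Finset.mem_union, Finset.mem_inter]
  constructor
  · intro hxA
    have hx : x ∈ I ∪ (J ∪ K) := by rw [hU]; exact Finset.mem_union_left _ hxA
    rcases Finset.mem_union.1 hx with h | h
    · exact Or.inr ⟨hxA, h⟩
    · rcases Finset.mem_union.1 h with h | h
      · exact Or.inl h
      · exact absurd hxA (Finset.disjoint_right.1 hd (hKB h))
  · rintro (h | ⟨h, -⟩)
    · exact hJA h
    · exact h

/-! #### Image constructions -/

lemma img_E (hU : I ∪ (J ∪ K) = Iset ℓ)
    {A B : Finset ℕ} (hd : Disjoint A B) (hu : A ∪ B = Iset ℓ)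
    (hJA : J ⊆ A) (hKB : K ⊆ B) :
    ∃ q, FIJK R ℓ I J K q = reE R (Iset ℓ) A B := by
  obtain ⟨hnd0, hndI⟩ := ndOf_pos I
  have hUAB : I ∪ (J ∪ K) = A ∪ B := by rw [hU, hu]
  have hA : A = J ∪ (A ∩ I) := decompA hUAB hd hJA hKB
  have hB : B = K ∪ (B ∩ I) := by
    refine decompA (I := I) (J := K) (K := J) (A := B) (B := A) ?_ hd.symm hKB hJA
    rw [Finset.union_comm K J, Finset.union_comm B A]
    exact hUAB
  have hWI : A ∩ I ⊆ I := Finset.inter_subset_right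
  have hYI : B ∩ I ⊆ I := Finset.inter_subset_right
  have hndW : ndOf I ∉ A ∩ I := fun h => hndI (hWI h)
  have hndY : ndOf I ∉ B ∩ I := fun h => hndI (hYI h)
  have hIAB : I ⊆ A ∪ B := by
    rw [← hUAB]; exact Finset.subset_union_left
  have hIBA : I ⊆ B ∪ A := by rw [Finset.union_comm]; exact hIAB
  have hIWY : I \ (A ∩ I) = B ∩ I := inter_compl hIAB hd
  have hIYW : I \ (B ∩ I) = A ∩ I := inter_compl hIBA hd.symm
  have hpart : insert (ndOf I) (A ∩ I) ∪ (B ∩ I) = insert (ndOf I) I := by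
    rw [Finset.insert_union]
    congr 1
    rw [← hIWY, Finset.union_sdiff_of_subset hWI]
  have hmins : (insert (ndOf I) I).min = (insert (ndOf I) (A ∩ I)).min ⊓ (B ∩ I).min := by
    rw [← hpart, Finset.min_union]
  rcases le_total ((insert (ndOf I) (A ∩ I)).min) ((B ∩ I).min) with hle | hle
  · have hsub : insert (ndOf I) (A ∩ I) ⊆ insert (ndOf I) I :=
      Finset.insert_subset_insert _ hWI
    have hmin : (insert (ndOf I) (A ∩ I)).min = (insert (ndOf I) I).min := by
      rw [hmins, inf_eq_left.2 hle]
    refine ⟨X (Sum.inl ⟨insert (ndOf I) (A ∩ I), hsub, hmin⟩) ⊗ₜ[R] 1, ?_⟩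
    rw [FIJK_inl, F1_inl]
    rw [if_pos (Finset.mem_insert_self (ndOf I) (A ∩ I))]
    rw [Finset.erase_insert hndW, ins_sdiff_ins hndI, hIWY, ← hA, ← hB]
  · have hsub : B ∩ I ⊆ insert (ndOf I) I :=
      hYI.trans (Finset.subset_insert _ _)
    have hmin : (B ∩ I).min = (insert (ndOf I) I).min := by
      rw [hmins, inf_eq_right.2 hle]
    refine ⟨X (Sum.inl ⟨B ∩ I, hsub, hmin⟩) ⊗ₜ[R] 1, ?_⟩
    rw [FIJK_inl, F1_inl]
    rw [if_neg hndY]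
    rw [ins_sdiff hndY, hIYW, Finset.erase_insert hndW, ← hA, ← hB]

lemma decompA' {I J K A B : Finset ℕ} (hAsub : A ⊆ I ∪ (J ∪ K)) (hd : Disjoint A B)
    (hJA : J ⊆ A) (hKB : K ⊆ B) : A = J ∪ (A ∩ I) := by
  ext x
  simp only [Finset.mem_union, Finset.mem_inter]
  constructor
  · intro hxA
    rcases Finset.mem_union.1 (hAsub hxA) with h | h
    · exact Or.inr ⟨hxA, h⟩
    · rcases Finset.mem_union.1 h with h | h
      · exact Or.inl h
      · exact absurd hxA (Finset.disjoint_right.1 hd (hKB h))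
  · rintro (h | ⟨h, -⟩)
    · exact hJA h
    · exact h

lemma img_D1_aux (hU : I ∪ (J ∪ K) = Iset ℓ)
    {C A B : Finset ℕ} (h1 : Disjoint C (A ∪ B)) (h2 : Disjoint A B)
    (h3 : C ∪ (A ∪ B) = Iset ℓ) (hJKC : J ∪ K ⊆ C) (hcard : 2 ≤ (A ∪ B).card)
    (hm : A.min = (A ∪ B).min) :
    ∃ q, FIJK R ℓ I J K q = reD R (Iset ℓ) C A B := by
  obtain ⟨hnd0, hndI⟩ := ndOf_pos I
  have hndCI : ndOf I ∉ C ∩ I := fun h => hndI (Finset.mem_inter.1 h).2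
  have hABI : A ∪ B ⊆ I := by
    intro x hx
    have hxS : x ∈ I ∪ (J ∪ K) := by
      rw [hU, ← h3]; exact Finset.mem_union_right _ hx
    rcases Finset.mem_union.1 hxS with h | h
    · exact h
    · exact absurd hx (Finset.disjoint_left.1 h1 (hJKC h))
  have hICI : I \ (C ∩ I) = A ∪ B := by
    ext x
    simp only [Finset.mem_sdiff, Finset.mem_inter]
    constructor
    · rintro ⟨hxI, hx⟩
      have hxS : x ∈ C ∪ (A ∪ B) := by
        rw [h3, ← hU]; exact Finset.mem_union_left _ hxI
      rcases Finset.mem_union.1 hxS with h | h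
      · exact absurd ⟨h, hxI⟩ hx
      · exact h
    · rintro hx
      exact ⟨hABI hx, fun hh => Finset.disjoint_left.1 h1 hh.1 hx⟩
  have hsd : insert (ndOf I) I \ insert (ndOf I) (C ∩ I) = A ∪ B := by
    rw [ins_sdiff_ins hndI, hICI]
  have hcond : insert (ndOf I) (C ∩ I) ⊆ insert (ndOf I) I ∧
      A ⊆ insert (ndOf I) I \ insert (ndOf I) (C ∩ I) ∧
      1 ≤ (insert (ndOf I) (C ∩ I)).card ∧
      2 ≤ (insert (ndOf I) I \ insert (ndOf I) (C ∩ I)).card ∧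
      A.min = (insert (ndOf I) I \ insert (ndOf I) (C ∩ I)).min := by
    refine ⟨Finset.insert_subset_insert _ Finset.inter_subset_right, ?_, ?_, ?_, ?_⟩
    · rw [hsd]; exact Finset.subset_union_left
    · rw [Finset.card_insert_of_notMem hndCI]; omega
    · rw [hsd]; exact hcard
    · rw [hsd]; exact hm
  refine ⟨X (Sum.inr ⟨(insert (ndOf I) (C ∩ I), A), hcond⟩) ⊗ₜ[R] 1, ?_⟩
  rw [FIJK_inl, F1_inr]
  rw [if_pos (Finset.mem_insert_self _ _)]
  rw [Finset.erase_insert hndCI, hsd, Finset.union_sdiff_cancel_left h2]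
  have hCu : C ∩ I ∪ J ∪ K = C := by
    ext x
    simp only [Finset.mem_union, Finset.mem_inter]
    constructor
    · rintro ((⟨h, -⟩ | h) | h)
      · exact h
      · exact hJKC (Finset.mem_union_left _ h)
      · exact hJKC (Finset.mem_union_right _ h)
    · intro hxC
      have hxS : x ∈ I ∪ (J ∪ K) := by
        rw [hU, ← h3]; exact Finset.mem_union_left _ hxC
      rcases Finset.mem_union.1 hxS with h | h
      · exact Or.inl (Or.inl ⟨hxC, h⟩)
      · rcases Finset.mem_union.1 h with h | h
        · exact Or.inl (Or.inr h)
        · exact Or.inr h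
  rw [hCu]

lemma img_D1 (hU : I ∪ (J ∪ K) = Iset ℓ)
    {C A B : Finset ℕ} (h1 : Disjoint C (A ∪ B)) (h2 : Disjoint A B)
    (h3 : C ∪ (A ∪ B) = Iset ℓ) (hJKC : J ∪ K ⊆ C) (hcard : 2 ≤ (A ∪ B).card) :
    ∃ q, FIJK R ℓ I J K q = reD R (Iset ℓ) C A B := by
  have hBA : B ∪ A = A ∪ B := Finset.union_comm _ _
  rcases le_total A.min B.min with hle | hle
  · exact img_D1_aux R hU h1 h2 h3 hJKC hcard
      (by rw [Finset.min_union, inf_eq_left.2 hle])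
  · rw [reD_symm]
    exact img_D1_aux R hU (hBA ▸ h1) h2.symm (hBA ▸ h3) hJKC (hBA ▸ hcard)
      (by rw [Finset.min_union]; exact (inf_eq_left.2 hle).symm)

lemma img_D2 (hU : I ∪ (J ∪ K) = Iset ℓ) (hIJK : Disjoint I (J ∪ K))
    {C A B : Finset ℕ} (h1 : Disjoint C (A ∪ B)) (h2 : Disjoint A B)
    (h3 : C ∪ (A ∪ B) = Iset ℓ) (hJA : J ⊆ A) (hKB : K ⊆ B)
    (hCcard : 1 ≤ C.card) (hne : ¬ (A = J ∧ B = K)) :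
    ∃ q, FIJK R ℓ I J K q = reD R (Iset ℓ) C A B := by
  obtain ⟨hnd0, hndI⟩ := ndOf_pos I
  have hCS : C ⊆ Iset ℓ := h3 ▸ Finset.subset_union_left
  have hCI : C ⊆ I := by
    intro x hx
    have hxS : x ∈ I ∪ (J ∪ K) := by rw [hU]; exact hCS hx
    rcases Finset.mem_union.1 hxS with h | h
    · exact h
    · exfalso
      rcases Finset.mem_union.1 h with h | h
      · exact Finset.disjoint_left.1 h1 hx (Finset.mem_union_left _ (hJA h))
      · exact Finset.disjoint_left.1 h1 hx (Finset.mem_union_right _ (hKB h))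
  have hndC : ndOf I ∉ C := fun h => hndI (hCI h)
  have hndAI : ndOf I ∉ A ∩ I := fun h => hndI (Finset.mem_inter.1 h).2
  have hndBI : ndOf I ∉ B ∩ I := fun h => hndI (Finset.mem_inter.1 h).2
  have hA : A = J ∪ (A ∩ I) := by
    refine decompA' ?_ h2 hJA hKB
    rw [hU, ← h3]; exact Finset.subset_union_left.trans Finset.subset_union_right
  have hB : B = K ∪ (B ∩ I) := by
    refine decompA' (I := I) (J := K) (K := J) (A := B) (B := A) ?_ h2.symm hKB hJA
    rw [Finset.union_comm K J, hU, ← h3]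
    exact Finset.subset_union_right.trans Finset.subset_union_right
  have hIC : I \ C = A ∩ I ∪ B ∩ I := by
    ext x
    simp only [Finset.mem_sdiff, Finset.mem_union, Finset.mem_inter]
    constructor
    · rintro ⟨hxI, hx⟩
      have hxS : x ∈ C ∪ (A ∪ B) := by
        rw [h3, ← hU]; exact Finset.mem_union_left _ hxI
      rcases Finset.mem_union.1 hxS with h | h
      · exact absurd h hx
      · rcases Finset.mem_union.1 h with h | h
        · exact Or.inl ⟨h, hxI⟩
        · exact Or.inr ⟨h, hxI⟩
    · rintro (⟨hxA, hxI⟩ | ⟨hxB, hxI⟩)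
      · exact ⟨hxI, fun hh => Finset.disjoint_left.1 h1 hh (Finset.mem_union_left _ hxA)⟩
      · exact ⟨hxI, fun hh => Finset.disjoint_left.1 h1 hh (Finset.mem_union_right _ hxB)⟩
  have hS0C : insert (ndOf I) I \ C = insert (ndOf I) (A ∩ I) ∪ B ∩ I := by
    rw [ins_sdiff hndC, hIC, Finset.insert_union]
  have hdisjP : Disjoint (insert (ndOf I) (A ∩ I)) (B ∩ I) := by
    rw [Finset.disjoint_left]
    intro x hx hx2
    rcases Finset.mem_insert.1 hx with rfl | hx
    · exact hndBI hx2
    · exact Finset.disjoint_left.1 h2 (Finset.mem_inter.1 hx).1 (Finset.mem_inter.1 hx2).1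
  have hCne : ¬ I ⊆ C := by
    intro hIC2
    have hCeq : C = I := Finset.Subset.antisymm hCI hIC2
    have hABJK : A ∪ B = J ∪ K := by
      have e1 : I ∪ (A ∪ B) = I ∪ (J ∪ K) := by rw [hU, ← h3, hCeq]
      have e2 : Disjoint I (A ∪ B) := by rw [← hCeq]; exact h1
      calc A ∪ B = (I ∪ (A ∪ B)) \ I := (Finset.union_sdiff_cancel_left e2).symm
      _ = (I ∪ (J ∪ K)) \ I := by rw [e1]
      _ = J ∪ K := Finset.union_sdiff_cancel_left hIJK
    refine hne ⟨Finset.Subset.antisymm ?_ hJA, Finset.Subset.antisymm ?_ hKB⟩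
    · intro x hx
      have : x ∈ J ∪ K := by rw [← hABJK]; exact Finset.mem_union_left _ hx
      rcases Finset.mem_union.1 this with h | h
      · exact h
      · exact absurd hx (Finset.disjoint_right.1 h2 (hKB h))
    · intro x hx
      have : x ∈ J ∪ K := by rw [← hABJK]; exact Finset.mem_union_right _ hx
      rcases Finset.mem_union.1 this with h | h
      · exact absurd hx (Finset.disjoint_left.1 h2 (hJA h))
      · exact h
  have hcard2 : 2 ≤ (insert (ndOf I) I \ C).card := by
    rw [ins_sdiff hndC, Finset.card_insert_of_notMem (fun h => hndI (Finset.mem_sdiff.1 h).1)]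
    have : (I \ C).Nonempty := by
      rw [Finset.sdiff_nonempty]
      exact hCne
    have := Finset.card_pos.2 this
    omega
  have hmins : (insert (ndOf I) I \ C).min
      = (insert (ndOf I) (A ∩ I)).min ⊓ (B ∩ I).min := by
    rw [hS0C, Finset.min_union]
  rcases le_total ((insert (ndOf I) (A ∩ I)).min) ((B ∩ I).min) with hle | hle
  · have hcond : C ⊆ insert (ndOf I) I ∧
        insert (ndOf I) (A ∩ I) ⊆ insert (ndOf I) I \ C ∧
        1 ≤ C.card ∧ 2 ≤ (insert (ndOf I) I \ C).card ∧
        (insert (ndOf I) (A ∩ I)).min = (insert (ndOf I) I \ C).min := by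
      refine ⟨hCI.trans (Finset.subset_insert _ _), ?_, hCcard, hcard2, ?_⟩
      · rw [hS0C]; exact Finset.subset_union_left
      · rw [hmins, inf_eq_left.2 hle]
    refine ⟨X (Sum.inr ⟨(C, insert (ndOf I) (A ∩ I)), hcond⟩) ⊗ₜ[R] 1, ?_⟩
    rw [FIJK_inl, F1_inr]
    rw [if_neg hndC, if_pos (Finset.mem_insert_self _ _)]
    rw [Finset.erase_insert hndAI, hS0C, Finset.union_sdiff_cancel_left hdisjP]
    rw [← hA, ← hB]
  · have hcond : C ⊆ insert (ndOf I) I ∧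
        B ∩ I ⊆ insert (ndOf I) I \ C ∧
        1 ≤ C.card ∧ 2 ≤ (insert (ndOf I) I \ C).card ∧
        (B ∩ I).min = (insert (ndOf I) I \ C).min := by
      refine ⟨hCI.trans (Finset.subset_insert _ _), ?_, hCcard, hcard2, ?_⟩
      · rw [hS0C]; exact Finset.subset_union_right
      · rw [hmins, inf_eq_right.2 hle]
    refine ⟨X (Sum.inr ⟨(C, B ∩ I), hcond⟩) ⊗ₜ[R] 1, ?_⟩
    rw [FIJK_inl, F1_inr]
    rw [if_neg hndC, if_neg hndBI]
    rw [hS0C, Finset.union_sdiff_cancel_right hdisjP]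
    rw [Finset.erase_insert hndAI]
    rw [← hA, ← hB]

lemma neg_pow_eps_sq (k : ℕ) (P Q : Finset ℕ) :
    ((-1 : ℤ) ^ k * epsm P Q) * ((-1 : ℤ) ^ k * epsm P Q) = 1 := by
  have h := epsm_mul_self P Q
  calc ((-1 : ℤ) ^ k * epsm P Q) * ((-1 : ℤ) ^ k * epsm P Q)
      = ((-1 : ℤ) ^ k * (-1 : ℤ) ^ k) * (epsm P Q * epsm P Q) := by ring
  _ = 1 := by rw [← pow_add, Even.neg_one_pow ⟨k, rfl⟩, h, mul_one]

lemma min_insert_zero (T : Finset ℕ) : (insert 0 T).min = ((0 : ℕ) : WithTop ℕ) := by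
  refine le_antisymm (Finset.min_le (Finset.mem_insert_self _ _)) (Finset.le_min ?_)
  intro a _
  exact WithTop.coe_le_coe.2 (Nat.zero_le a)

lemma img_D3 (hU : I ∪ (J ∪ K) = Iset ℓ) (hIJK : Disjoint I (J ∪ K))
    (hJK : Disjoint J K)
    {C A B : Finset ℕ} (h1 : Disjoint C (A ∪ B)) (h2 : Disjoint A B)
    (h3 : C ∪ (A ∪ B) = Iset ℓ) (hAJ : A ⊆ J) (hBK : B ⊆ K)
    (hcard : 2 ≤ (A ∪ B).card) (hne : ¬ (A = J ∧ B = K)) :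
    ∃ q, FIJK R ℓ I J K q = reD R (Iset ℓ) C A B := by
  have h0S : (0 : ℕ) ∉ Iset ℓ := by simp [Iset]
  have h0JK : (0 : ℕ) ∉ J ∪ K := fun h => h0S (by rw [← hU]; exact Finset.mem_union_right _ h)
  have h0Z : (0 : ℕ) ∉ (J ∪ K) \ (A ∪ B) := fun h => h0JK (Finset.mem_sdiff.1 h).1
  have hABJK : A ∪ B ⊆ J ∪ K := Finset.union_subset_union hAJ hBK
  have hZne : ((J ∪ K) \ (A ∪ B)).Nonempty := by
    rw [Finset.sdiff_nonempty]
    intro hsub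
    refine hne ⟨Finset.Subset.antisymm hAJ ?_, Finset.Subset.antisymm hBK ?_⟩
    · intro x hx
      rcases Finset.mem_union.1 (hsub (Finset.mem_union_left _ hx)) with h | h
      · exact h
      · exact absurd hx (Finset.disjoint_right.1 hJK (hBK h))
    · intro x hx
      rcases Finset.mem_union.1 (hsub (Finset.mem_union_right _ hx)) with h | h
      · exact absurd hx (Finset.disjoint_left.1 hJK (hAJ h))
      · exact h
  have hsdz : insert 0 (J ∪ K) \ insert 0 ((J ∪ K) \ (A ∪ B)) = A ∪ B := by
    rw [ins_sdiff_ins h0JK, Finset.sdiff_sdiff_eq_self hABJK]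
  have hcond : insert 0 ((J ∪ K) \ (A ∪ B)) ⊆ insert 0 (J ∪ K) ∧
      2 ≤ (insert 0 ((J ∪ K) \ (A ∪ B))).card ∧
      2 ≤ ((insert 0 (J ∪ K)) \ insert 0 ((J ∪ K) \ (A ∪ B))).card ∧
      (insert 0 ((J ∪ K) \ (A ∪ B))).min = (insert 0 (J ∪ K)).min := by
    refine ⟨Finset.insert_subset_insert _ Finset.sdiff_subset, ?_, ?_, ?_⟩
    · rw [Finset.card_insert_of_notMem h0Z]
      have := Finset.card_pos.2 hZne
      omega
    · rw [hsdz]; exact hcard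
    · rw [min_insert_zero, min_insert_zero]
  refine ⟨(1 : RRing R (insert (ndOf I) I)) ⊗ₜ[R]
    (((-1 : ℤ) ^ K.card *
      epsm (J ∩ (insert 0 (J ∪ K) \ insert 0 ((J ∪ K) \ (A ∪ B))))
        (K ∩ (insert 0 (J ∪ K) \ insert 0 ((J ∪ K) \ (A ∪ B))))) •
      X ⟨insert 0 ((J ∪ K) \ (A ∪ B)), hcond⟩), ?_⟩
  rw [FIJK_inr, map_zsmul, F2_X, smul_smul, neg_pow_eps_sq, one_smul]
  rw [hsdz, Finset.erase_insert h0Z]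
  have hJint : J ∩ (A ∪ B) = A := by
    ext x
    simp only [Finset.mem_inter, Finset.mem_union]
    constructor
    · rintro ⟨hxJ, hxA | hxB⟩
      · exact hxA
      · exact absurd hxJ (Finset.disjoint_right.1 hJK (hBK hxB))
    · intro hx
      exact ⟨hAJ hx, Or.inl hx⟩
  have hKint : K ∩ (A ∪ B) = B := by
    ext x
    simp only [Finset.mem_inter, Finset.mem_union]
    constructor
    · rintro ⟨hxK, hxA | hxB⟩
      · exact absurd (hAJ hxA) (Finset.disjoint_right.1 hJK hxK)
      · exact hxB
    · intro hx
      exact ⟨hBK hx, Or.inr hx⟩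
  have hIZ : I ∪ (J ∪ K) \ (A ∪ B) = C := by
    ext x
    constructor
    · intro hx
      rcases Finset.mem_union.1 hx with hxI | hxZ
      · have hxS : x ∈ C ∪ (A ∪ B) := by
          rw [h3, ← hU]; exact Finset.mem_union_left _ hxI
        rcases Finset.mem_union.1 hxS with h | h
        · exact h
        · exact absurd (hABJK h) (Finset.disjoint_left.1 hIJK hxI)
      · obtain ⟨hxJK, hxAB⟩ := Finset.mem_sdiff.1 hxZ
        have hxS : x ∈ C ∪ (A ∪ B) := by
          rw [h3, ← hU]; exact Finset.mem_union_right _ hxJK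
        rcases Finset.mem_union.1 hxS with h | h
        · exact h
        · exact absurd h hxAB
    · intro hxC
      have hxS : x ∈ I ∪ (J ∪ K) := by rw [hU, ← h3]; exact Finset.mem_union_left _ hxC
      rcases Finset.mem_union.1 hxS with h | h
      · exact Finset.mem_union_left _ h
      · exact Finset.mem_union_right _
          (Finset.mem_sdiff.2 ⟨h, fun hh => Finset.disjoint_left.1 h1 hxC hh⟩)
  rw [hJint, hKint, hIZ]

/-! #### The three variants of the distinguished variable, and kill lemmas -/

def DVar (ℓ : ℕ) (I J K Is Js Ks : Finset ℕ) : Prop :=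
  (Is = I ∧ Js = J ∧ Ks = K ∪ {ℓ+1}) ∨ (Is = I ∪ {ℓ+1} ∧ Js = J ∧ Ks = K) ∨
  (Is = I ∧ Js = J ∪ {ℓ+1} ∧ Ks = K)

lemma nmemS {ℓ : ℕ} {X : Finset ℕ} (h : X ⊆ Iset ℓ) : (ℓ+1) ∉ X :=
  fun hh => n_notin_S ℓ (h hh)

section Kill

variable {ℓ : ℕ} {I J K Is Js Ks : Finset ℕ}

lemma killE (hDvar : DVar ℓ I J K Is Js Ks)
    (hJS : J ⊆ Iset ℓ) (hKS : K ⊆ Iset ℓ)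
    {A B : Finset ℕ} (hA : A ⊆ Iset ℓ) (hB : B ⊆ Iset ℓ)
    (hnp : ¬ preceq J K A B) :
    ¬ preceq Js Ks (A ∪ {ℓ+1}) B ∧ ¬ preceq Js Ks A (B ∪ {ℓ+1}) := by
  have hnJ : (ℓ+1) ∉ J := nmemS hJS
  have hnK : (ℓ+1) ∉ K := nmemS hKS
  have hnA : (ℓ+1) ∉ A := nmemS hA
  have hnB : (ℓ+1) ∉ B := nmemS hB
  rcases hDvar with ⟨rfl, rfl, rfl⟩ | ⟨rfl, rfl, rfl⟩ | ⟨rfl, rfl, rfl⟩ <;>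
  · refine ⟨fun hp => hnp ?_, fun hp => hnp ?_⟩ <;>
    · simp only [preceq, usin, Finset.union_subset_iff, Finset.insert_subset_iff,
        Finset.subset_insert_iff_of_notMem hnJ, Finset.subset_insert_iff_of_notMem hnK,
        Finset.subset_insert_iff_of_notMem hnA, Finset.subset_insert_iff_of_notMem hnB,
        hnA, hnB, hnJ, hnK, Finset.mem_insert, Finset.mem_singleton,
        false_and, and_false, false_or, or_false, and_true, true_and] at hp ⊢
      tauto

lemma killD (hDvar : DVar ℓ I J K Is Js Ks)
    (hJS : J ⊆ Iset ℓ) (hKS : K ⊆ Iset ℓ)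
    {C A B : Finset ℕ} (hA : A ⊆ Iset ℓ) (hB : B ⊆ Iset ℓ) (hC : C ⊆ Iset ℓ)
    (hx1 : ¬ preceq A B J K) (hx2 : ¬ preceq J K A B) (hx3 : ¬ J ∪ K ⊆ C) :
    (¬ preceq Js Ks A B ∧ ¬ preceq A B Js Ks ∧ ¬ Js ∪ Ks ⊆ C ∪ {ℓ+1}) ∧
    (¬ preceq Js Ks (A ∪ {ℓ+1}) B ∧ ¬ preceq (A ∪ {ℓ+1}) B Js Ks ∧ ¬ Js ∪ Ks ⊆ C) ∧
    (¬ preceq Js Ks A (B ∪ {ℓ+1}) ∧ ¬ preceq A (B ∪ {ℓ+1}) Js Ks ∧ ¬ Js ∪ Ks ⊆ C) := by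
  have hnJ : (ℓ+1) ∉ J := nmemS hJS
  have hnK : (ℓ+1) ∉ K := nmemS hKS
  have hnA : (ℓ+1) ∉ A := nmemS hA
  have hnB : (ℓ+1) ∉ B := nmemS hB
  have hnC : (ℓ+1) ∉ C := nmemS hC
  simp only [preceq, Finset.union_subset_iff] at hx1 hx2 hx3
  rcases hDvar with ⟨rfl, rfl, rfl⟩ | ⟨rfl, rfl, rfl⟩ | ⟨rfl, rfl, rfl⟩ <;>
  · refine ⟨⟨?_, ?_, ?_⟩, ⟨?_, ?_, ?_⟩, ⟨?_, ?_, ?_⟩⟩ <;>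
    · intro hp
      simp only [preceq, usin, Finset.union_subset_iff, Finset.insert_subset_iff,
        Finset.subset_insert_iff_of_notMem hnJ, Finset.subset_insert_iff_of_notMem hnK,
        Finset.subset_insert_iff_of_notMem hnA, Finset.subset_insert_iff_of_notMem hnB,
        Finset.subset_insert_iff_of_notMem hnC,
        hnA, hnB, hnC, hnJ, hnK, Finset.mem_insert, Finset.mem_singleton,
        false_and, and_false, false_or, or_false, and_true, true_and] at hp
      all_goals tauto

end Kill

/-! #### Validity of the children upstairs -/

section Valid

variable {ℓ : ℕ} {C A B : Finset ℕ}

lemma uSp (ℓ : ℕ) : Iset ℓ ∪ {ℓ+1} = Iset (ℓ+1) := by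
  rw [usin, ← Sp_eq]

lemma validD_ch1 (h1 : Disjoint C (A ∪ B)) (h2 : Disjoint A B)
    (h3 : C ∪ (A ∪ B) = Iset ℓ) (hcard : 2 ≤ (A ∪ B).card) :
    validD (Iset (ℓ+1)) (C ∪ {ℓ+1}) A B := by
  have hAB : A ∪ B ⊆ Iset ℓ := h3 ▸ Finset.subset_union_right
  refine ⟨?_, h2, ?_, ?_, hcard⟩
  · exact Finset.disjoint_union_left.2
      ⟨h1, Finset.disjoint_singleton_left.2 (nmemS hAB)⟩
  · rw [Finset.union_right_comm, h3, uSp]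
  · exact Finset.card_pos.2 ⟨ℓ+1, Finset.mem_union_right _ (Finset.mem_singleton_self _)⟩

lemma validD_ch2 (h1 : Disjoint C (A ∪ B)) (h2 : Disjoint A B)
    (h3 : C ∪ (A ∪ B) = Iset ℓ) (hcard : 2 ≤ (A ∪ B).card) (hCc : 1 ≤ C.card) :
    validD (Iset (ℓ+1)) C (A ∪ {ℓ+1}) B := by
  have hCS : C ⊆ Iset ℓ := h3 ▸ Finset.subset_union_left
  have hAB : A ∪ B ⊆ Iset ℓ := h3 ▸ Finset.subset_union_right
  have hBS : B ⊆ Iset ℓ := Finset.subset_union_right.trans hAB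
  have hre : (A ∪ {ℓ+1}) ∪ B = (A ∪ B) ∪ {ℓ+1} := Finset.union_right_comm _ _ _
  refine ⟨?_, ?_, ?_, hCc, ?_⟩
  · rw [hre]
    exact Finset.disjoint_union_right.2
      ⟨h1, Finset.disjoint_singleton_right.2 (nmemS hCS)⟩
  · exact Finset.disjoint_union_left.2
      ⟨h2, Finset.disjoint_singleton_left.2 (nmemS hBS)⟩
  · rw [hre, ← Finset.union_assoc, h3, uSp]
  · refine le_trans hcard (Finset.card_le_card ?_)
    rw [hre]
    exact Finset.subset_union_left

lemma validD_ch3 (h1 : Disjoint C (A ∪ B)) (h2 : Disjoint A B)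
    (h3 : C ∪ (A ∪ B) = Iset ℓ) (hcard : 2 ≤ (A ∪ B).card) (hCc : 1 ≤ C.card) :
    validD (Iset (ℓ+1)) C A (B ∪ {ℓ+1}) := by
  have hCS : C ⊆ Iset ℓ := h3 ▸ Finset.subset_union_left
  have hAB : A ∪ B ⊆ Iset ℓ := h3 ▸ Finset.subset_union_right
  have hAS : A ⊆ Iset ℓ := Finset.subset_union_left.trans hAB
  have hre : A ∪ (B ∪ {ℓ+1}) = (A ∪ B) ∪ {ℓ+1} := (Finset.union_assoc _ _ _).symm
  refine ⟨?_, ?_, ?_, hCc, ?_⟩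
  · rw [hre]
    exact Finset.disjoint_union_right.2
      ⟨h1, Finset.disjoint_singleton_right.2 (nmemS hCS)⟩
  · exact Finset.disjoint_union_right.2
      ⟨h2, Finset.disjoint_singleton_right.2 (nmemS hAS)⟩
  · rw [hre, ← Finset.union_assoc, h3, uSp]
  · refine le_trans hcard (Finset.card_le_card ?_)
    rw [hre]
    exact Finset.subset_union_left

lemma validE_ch1 (h2 : Disjoint A B) (h3 : A ∪ B = Iset ℓ) :
    validE (Iset (ℓ+1)) (A ∪ {ℓ+1}) B := by
  have hBS : B ⊆ Iset ℓ := h3 ▸ Finset.subset_union_right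
  refine ⟨?_, ?_⟩
  · exact Finset.disjoint_union_left.2
      ⟨h2, Finset.disjoint_singleton_left.2 (nmemS hBS)⟩
  · rw [Finset.union_right_comm, h3, uSp]

lemma validE_ch2 (h2 : Disjoint A B) (h3 : A ∪ B = Iset ℓ) :
    validE (Iset (ℓ+1)) A (B ∪ {ℓ+1}) := by
  have hAS : A ⊆ Iset ℓ := h3 ▸ Finset.subset_union_left
  refine ⟨?_, ?_⟩
  · exact Finset.disjoint_union_right.2
      ⟨h2, Finset.disjoint_singleton_right.2 (nmemS hAS)⟩
  · rw [← Finset.union_assoc, h3, uSp]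

end Valid

/-! #### The `Good` predicate -/

variable (ℓ : ℕ) (I J K : Finset ℕ)

def GoodP (D : RRing R (Iset (ℓ+1))) (p : RRing R (Iset ℓ)) : Prop :=
  ∃ q, D * (Fre R ℓ p - Fre R ℓ (FIJK R ℓ I J K q)) ∈ reIdeal R (Iset (ℓ+1))

variable {ℓ I J K}
variable {D : RRing R (Iset (ℓ+1))}

lemma GoodP_zero : GoodP R ℓ I J K D 0 :=
  ⟨0, by simp only [map_zero, sub_zero, mul_zero]; exact Ideal.zero_mem _⟩

lemma GoodP_add {p₁ p₂ : RRing R (Iset ℓ)} (h1 : GoodP R ℓ I J K D p₁)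
    (h2 : GoodP R ℓ I J K D p₂) : GoodP R ℓ I J K D (p₁ + p₂) := by
  obtain ⟨q₁, h1⟩ := h1
  obtain ⟨q₂, h2⟩ := h2
  refine ⟨q₁ + q₂, ?_⟩
  have key : D * (Fre R ℓ (p₁ + p₂) - Fre R ℓ (FIJK R ℓ I J K (q₁ + q₂)))
      = D * (Fre R ℓ p₁ - Fre R ℓ (FIJK R ℓ I J K q₁))
        + D * (Fre R ℓ p₂ - Fre R ℓ (FIJK R ℓ I J K q₂)) := by
    rw [map_add, map_add, map_add]; ring
  rw [key]
  exact Ideal.add_mem _ h1 h2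

lemma GoodP_zsmul {p : RRing R (Iset ℓ)} (z : ℤ) (h : GoodP R ℓ I J K D p) :
    GoodP R ℓ I J K D (z • p) := by
  obtain ⟨q, h⟩ := h
  refine ⟨z • q, ?_⟩
  have key : D * (Fre R ℓ (z • p) - Fre R ℓ (FIJK R ℓ I J K (z • q)))
      = z • (D * (Fre R ℓ p - Fre R ℓ (FIJK R ℓ I J K q))) := by
    rw [map_zsmul, map_zsmul, map_zsmul, ← smul_sub, mul_smul_comm]
  rw [key, zsmul_eq_mul]
  exact Ideal.mul_mem_left _ _ h

lemma GoodP_neg {p : RRing R (Iset ℓ)} (h : GoodP R ℓ I J K D p) :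
    GoodP R ℓ I J K D (-p) := by
  have := GoodP_zsmul R (-1) h
  simpa using this

lemma GoodP_sub {p₁ p₂ : RRing R (Iset ℓ)} (h1 : GoodP R ℓ I J K D p₁)
    (h2 : GoodP R ℓ I J K D p₂) : GoodP R ℓ I J K D (p₁ - p₂) := by
  rw [sub_eq_add_neg]
  exact GoodP_add R h1 (GoodP_neg R h2)

lemma GoodP_mul {p₁ p₂ : RRing R (Iset ℓ)} (h1 : GoodP R ℓ I J K D p₁)
    (h2 : GoodP R ℓ I J K D p₂) : GoodP R ℓ I J K D (p₁ * p₂) := by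
  obtain ⟨q₁, h1⟩ := h1
  obtain ⟨q₂, h2⟩ := h2
  refine ⟨q₁ * q₂, ?_⟩
  have key : D * (Fre R ℓ (p₁ * p₂) - Fre R ℓ (FIJK R ℓ I J K (q₁ * q₂)))
      = Fre R ℓ p₁ * (D * (Fre R ℓ p₂ - Fre R ℓ (FIJK R ℓ I J K q₂)))
        + Fre R ℓ (FIJK R ℓ I J K q₂)
          * (D * (Fre R ℓ p₁ - Fre R ℓ (FIJK R ℓ I J K q₁))) := by
    rw [map_mul, map_mul, map_mul]; ring
  rw [key]
  exact Ideal.add_mem _ (Ideal.mul_mem_left _ _ h2) (Ideal.mul_mem_left _ _ h1)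

lemma GoodP_C (r : R) : GoodP R ℓ I J K D (C r) := by
  refine ⟨(C r : RRing R (insert (ndOf I) I)) ⊗ₜ[R] 1, ?_⟩
  rw [FIJK_inl]
  have hFC : F1IJK R ℓ I J K (C r) = C r := by
    simp [F1IJK, aeval_C, MvPolynomial.algebraMap_eq]
  rw [hFC, sub_self, mul_zero]
  exact Ideal.zero_mem _

lemma GoodP_sum {α : Type*} {s : Finset α} {f : α → RRing R (Iset ℓ)}
    (h : ∀ a ∈ s, GoodP R ℓ I J K D (f a)) : GoodP R ℓ I J K D (∑ a ∈ s, f a) :=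
  Finset.sum_induction f _ (fun _ _ => GoodP_add R) (GoodP_zero R) h

lemma GoodP_of_image {w : RRing R (Iset ℓ)} (h : ∃ q, FIJK R ℓ I J K q = w) :
    GoodP R ℓ I J K D w := by
  obtain ⟨q, hq⟩ := h
  exact ⟨q, by rw [hq, sub_self, mul_zero]; exact Ideal.zero_mem _⟩

/-! #### Core analysis -/

section Core

variable {ℓ : ℕ} {I J K Is Js Ks : Finset ℕ}
variable (hd1 : Disjoint I (J ∪ K)) (hd2 : Disjoint J K) (hU : I ∪ (J ∪ K) = Iset ℓ)
  (hIc : 1 ≤ I.card) (hJKc : 2 ≤ (J ∪ K).card) (hminJ : J.min = (J ∪ K).min)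
  (hDvar : DVar ℓ I J K Is Js Ks)

include hDvar hd1 hd2 hU hIc hJKc in
lemma validD_var : validD (Iset (ℓ+1)) Is Js Ks := by
  rcases hDvar with ⟨rfl, rfl, rfl⟩ | ⟨rfl, rfl, rfl⟩ | ⟨rfl, rfl, rfl⟩
  · exact validD_ch3 hd1 hd2 hU hJKc hIc
  · exact validD_ch1 hd1 hd2 hU hJKc
  · exact validD_ch2 hd1 hd2 hU hJKc hIc

include hU hJKc in
lemma ell_pos : 1 ≤ ℓ := by
  have hJKS : J ∪ K ⊆ Iset ℓ := hU ▸ Finset.subset_union_right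
  rcases Nat.eq_zero_or_pos ℓ with rfl | h
  · exfalso
    have h0 : J ∪ K = ∅ := Finset.subset_empty.1 (by simpa [Iset] using hJKS)
    rw [h0] at hJKc
    simp at hJKc
  · exact h

include hd2 hJKc hminJ in
lemma J_nonempty : J.Nonempty := by
  rw [Finset.nonempty_iff_ne_empty]
  intro h
  subst h
  rw [Finset.min_empty] at hminJ
  have h0 : (∅ : Finset ℕ) ∪ K = ∅ := Finset.min_eq_top.1 hminJ.symm
  rw [h0] at hJKc
  simp at hJKc

include hd1 hd2 hU hIc hJKc hDvar in
lemma goodD_reE {A B : Finset ℕ} (hd : Disjoint A B) (hu : A ∪ B = Iset ℓ) :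
    GoodP R ℓ I J K (reD R (Iset (ℓ+1)) Is Js Ks) (reE R (Iset ℓ) A B) := by
  have hJS : J ⊆ Iset ℓ := by
    rw [← hU]; exact Finset.subset_union_left.trans Finset.subset_union_right
  have hKS : K ⊆ Iset ℓ := by
    rw [← hU]; exact Finset.subset_union_right.trans Finset.subset_union_right
  have hAS : A ⊆ Iset ℓ := hu ▸ Finset.subset_union_left
  have hBS : B ⊆ Iset ℓ := hu ▸ Finset.subset_union_right
  by_cases hp : preceq J K A B
  · rcases hp with ⟨hJA, hKB⟩ | ⟨hJB, hKA⟩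
    · exact GoodP_of_image R (img_E R hU hd hu hJA hKB)
    · rw [reE_symm]
      exact GoodP_of_image R
        (img_E R hU hd.symm (by rw [Finset.union_comm]; exact hu) hJB hKA)
  · refine ⟨0, ?_⟩
    rw [map_zero, map_zero, sub_zero]
    rw [Fre_reE R ℓ hd hu (ell_pos hU hJKc)]
    rw [mul_add]
    obtain ⟨hk1, hk2⟩ := killE hDvar hJS hKS hAS hBS hp
    refine Ideal.add_mem _ ?_ ?_
    · have := mem_ideal_ED R (validE_ch1 hd hu)
        (validD_var hd1 hd2 hU hIc hJKc hDvar) hk1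
      rwa [mul_comm] at this
    · have := mem_ideal_ED R (validE_ch2 hd hu)
        (validD_var hd1 hd2 hU hIc hJKc hDvar) hk2
      rwa [mul_comm] at this

include hd1 hd2 hU hIc hJKc hDvar in
lemma goodD_reD_base {C A B : Finset ℕ} (h1 : Disjoint C (A ∪ B)) (h2 : Disjoint A B)
    (h3 : C ∪ (A ∪ B) = Iset ℓ) (hCc : 1 ≤ C.card) (hABc : 2 ≤ (A ∪ B).card)
    (hnc : ¬ ((A = J ∧ B = K) ∨ (A = K ∧ B = J))) :
    GoodP R ℓ I J K (reD R (Iset (ℓ+1)) Is Js Ks) (reD R (Iset ℓ) C A B) := by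
  have hJS : J ⊆ Iset ℓ := by
    rw [← hU]; exact Finset.subset_union_left.trans Finset.subset_union_right
  have hKS : K ⊆ Iset ℓ := by
    rw [← hU]; exact Finset.subset_union_right.trans Finset.subset_union_right
  have hABS : A ∪ B ⊆ Iset ℓ := h3 ▸ Finset.subset_union_right
  have hAS : A ⊆ Iset ℓ := Finset.subset_union_left.trans hABS
  have hBS : B ⊆ Iset ℓ := Finset.subset_union_right.trans hABS
  have hCS : C ⊆ Iset ℓ := h3 ▸ Finset.subset_union_left
  have hBA : B ∪ A = A ∪ B := Finset.union_comm _ _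
  by_cases hb1 : J ∪ K ⊆ C
  · exact GoodP_of_image R (img_D1 R hU h1 h2 h3 hb1 hABc)
  by_cases hb2 : preceq J K A B
  · rcases hb2 with ⟨hJA, hKB⟩ | ⟨hJB, hKA⟩
    · exact GoodP_of_image R (img_D2 R hU hd1 h1 h2 h3 hJA hKB hCc
        (fun he => hnc (Or.inl he)))
    · rw [reD_symm R (Iset ℓ) C A B]
      exact GoodP_of_image R (img_D2 R (A := B) (B := A) hU hd1
        (by rw [Finset.union_comm B A]; exact h1) h2.symm
        (by rw [Finset.union_comm B A]; exact h3) hJB hKA hCc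
        (fun he => hnc (Or.inr ⟨he.2, he.1⟩)))
  by_cases hb3 : preceq A B J K
  · rcases hb3 with ⟨hAJ, hBK⟩ | ⟨hAK, hBJ⟩
    · exact GoodP_of_image R (img_D3 R hU hd1 hd2 h1 h2 h3 hAJ hBK hABc
        (fun he => hnc (Or.inl he)))
    · rw [reD_symm R (Iset ℓ) C A B]
      exact GoodP_of_image R (img_D3 R (A := B) (B := A) hU hd1 hd2
        (by rw [Finset.union_comm B A]; exact h1) h2.symm
        (by rw [Finset.union_comm B A]; exact h3) hBJ hAK
        (by rw [Finset.union_comm B A]; exact hABc)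
        (fun he => hnc (Or.inr ⟨he.2, he.1⟩)))
  · refine ⟨0, ?_⟩
    rw [map_zero, map_zero, sub_zero]
    rw [Fre_reD R ℓ h1 h2 h3 hCc hABc]
    rw [mul_add, mul_add]
    obtain ⟨⟨k11, k12, k13⟩, ⟨k21, k22, k23⟩, ⟨k31, k32, k33⟩⟩ :=
      killD hDvar hJS hKS hAS hBS hCS hb3 hb2 hb1
    have hDv := validD_var hd1 hd2 hU hIc hJKc hDvar
    refine Ideal.add_mem _ (Ideal.add_mem _ ?_ ?_) ?_
    · exact mem_ideal_DD R hDv (validD_ch1 h1 h2 h3 hABc) k11 k12 k13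
    · exact mem_ideal_DD R hDv (validD_ch2 h1 h2 h3 hABc hCc) k21 k22 k23
    · exact mem_ideal_DD R hDv (validD_ch3 h1 h2 h3 hABc hCc) k31 k32 k33

end Core

/-! #### The corner case `reD R (Iset ℓ) I J K` -/

section Corner

variable {ℓ : ℕ} {I J K Is Js Ks : Finset ℕ}
variable (hd1 : Disjoint I (J ∪ K)) (hd2 : Disjoint J K) (hU : I ∪ (J ∪ K) = Iset ℓ)
  (hIc : 1 ≤ I.card) (hJKc : 2 ≤ (J ∪ K).card) (hminJ : J.min = (J ∪ K).min)
  (hDvar : DVar ℓ I J K Is Js Ks)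

include hd1 hU in
lemma corner_II {I' J' : Finset ℕ} (hI'S : I' ⊆ Iset ℓ) (hJ'sub : J' ⊆ Iset ℓ \ I')
    (hc : (J' = J ∧ (Iset ℓ \ I') \ J' = K) ∨ (J' = K ∧ (Iset ℓ \ I') \ J' = J)) :
    I' = I := by
  have hu' : J' ∪ ((Iset ℓ \ I') \ J') = Iset ℓ \ I' :=
    Finset.union_sdiff_of_subset hJ'sub
  have hsd : Iset ℓ \ I' = J ∪ K := by
    rcases hc with ⟨e1, e2⟩ | ⟨e1, e2⟩
    · rw [← hu', e2, e1]
    · rw [← hu', e2, e1, Finset.union_comm]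
  calc I' = Iset ℓ \ (Iset ℓ \ I') := (Finset.sdiff_sdiff_eq_self hI'S).symm
  _ = Iset ℓ \ (J ∪ K) := by rw [hsd]
  _ = I := by rw [← hU, Finset.union_sdiff_cancel_right hd1]

include hd1 hd2 hU hIc hJKc hDvar in
lemma good_term {I' J' : Finset ℕ} (hI'S : I' ⊆ Iset ℓ) (hJ'sub : J' ⊆ Iset ℓ \ I')
    (h1c : 1 ≤ I'.card) (h2c : 2 ≤ (Iset ℓ \ I').card)
    (hnc : ¬ ((J' = J ∧ (Iset ℓ \ I') \ J' = K) ∨ (J' = K ∧ (Iset ℓ \ I') \ J' = J))) :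
    GoodP R ℓ I J K (reD R (Iset (ℓ+1)) Is Js Ks)
      (epsm J' ((Iset ℓ \ I') \ J') • reD R (Iset ℓ) I' J' ((Iset ℓ \ I') \ J')) := by
  refine GoodP_zsmul R _ ?_
  refine goodD_reD_base R hd1 hd2 hU hIc hJKc hDvar ?_ Finset.disjoint_sdiff ?_ h1c ?_ hnc
  · rw [Finset.union_sdiff_of_subset hJ'sub]; exact Finset.disjoint_sdiff
  · rw [Finset.union_sdiff_of_subset hJ'sub, Finset.union_sdiff_of_subset hI'S]
  · rw [Finset.union_sdiff_of_subset hJ'sub]; exact h2c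

include hd1 hd2 hU hIc hJKc hDvar in
lemma good_ite_term {I' J' : Finset ℕ} (hI'S : I' ⊆ Iset ℓ) (hJ'sub : J' ⊆ Iset ℓ \ I')
    (cond : Prop) [Decidable cond]
    (himp : cond → (1 ≤ I'.card ∧ 2 ≤ (Iset ℓ \ I').card) ∧
      ¬ ((J' = J ∧ (Iset ℓ \ I') \ J' = K) ∨ (J' = K ∧ (Iset ℓ \ I') \ J' = J))) :
    GoodP R ℓ I J K (reD R (Iset (ℓ+1)) Is Js Ks)
      (if cond then epsm J' ((Iset ℓ \ I') \ J') • reD R (Iset ℓ) I' J' ((Iset ℓ \ I') \ J')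
       else 0) := by
  by_cases h : cond
  · rw [if_pos h]
    obtain ⟨⟨c1, c2⟩, c3⟩ := himp h
    exact good_term R hd1 hd2 hU hIc hJKc hDvar hI'S hJ'sub c1 c2 c3
  · rw [if_neg h]
    exact GoodP_zero R

lemma good_relE_inst {a b c : ℕ} (ha : a ∈ Iset ℓ) (hb : b ∈ Iset ℓ) (hc : c ∈ Iset ℓ)
    (hab : a ≠ b) (hac : a ≠ c) (hbc : b ≠ c) :
    GoodP R ℓ I J K (reD R (Iset (ℓ+1)) Is Js Ks) (relE R (Iset ℓ) a b c) := by
  have hSsub : Iset ℓ ⊆ Iset (ℓ+1) := by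
    intro x hx
    simp only [Iset, Finset.mem_Icc] at hx ⊢
    omega
  refine ⟨0, ?_⟩
  rw [map_zero, map_zero, sub_zero, Fre_relE R ℓ ha hb hc hab hac hbc]
  exact Ideal.mul_mem_left _ _
    (mem_ideal_relE R (hSsub ha) (hSsub hb) (hSsub hc) hab hac hbc)

include hd1 hd2 hU hIc hJKc hminJ hDvar in
lemma goodD_corner :
    GoodP R ℓ I J K (reD R (Iset (ℓ+1)) Is Js Ks) (reD R (Iset ℓ) I J K) := by
  have hJS : J ⊆ Iset ℓ := by
    rw [← hU]; exact Finset.subset_union_left.trans Finset.subset_union_right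
  have hKS : K ⊆ Iset ℓ := by
    rw [← hU]; exact Finset.subset_union_right.trans Finset.subset_union_right
  have hIS : I ⊆ Iset ℓ := hU ▸ Finset.subset_union_left
  have hSI : Iset ℓ \ I = J ∪ K := by
    rw [← hU, Finset.union_sdiff_cancel_left hd1]
  have hSIJ : (Iset ℓ \ I) \ J = K := by
    rw [hSI, Finset.union_sdiff_cancel_left hd2]
  have hIps : I ∈ (Iset ℓ).powerset := Finset.mem_powerset.2 hIS
  have hJps : J ∈ (Iset ℓ \ I).powerset := by
    rw [Finset.mem_powerset, hSI]; exact Finset.subset_union_left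
  obtain ⟨a₀, ha₀⟩ := Finset.card_pos.1 hIc
  obtain ⟨b₀, hb₀⟩ := J_nonempty hd2 hJKc hminJ
  have haS : a₀ ∈ Iset ℓ := hIS ha₀
  have hbS : b₀ ∈ Iset ℓ := hJS hb₀
  rcases Finset.eq_empty_or_nonempty K with hKe | ⟨k₀, hk₀⟩
  · -- K = ∅ : the corner sits in the first sum of `relE (Iset ℓ) b₀ b₁ a₀`
    subst hKe
    obtain ⟨b₀', hb₀', b₁, hb₁, hbb⟩ := Finset.one_lt_card.1 (by
      rw [Finset.union_empty] at hJKc; omega : 1 < J.card)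
    clear hb₀ hbS
    have hb₀S : b₀' ∈ Iset ℓ := hJS hb₀'
    have hb₁S : b₁ ∈ Iset ℓ := hJS hb₁
    have hba : b₀' ≠ a₀ := by
      rintro rfl
      exact Finset.disjoint_left.1 hd1 ha₀ (Finset.mem_union_left _ hb₀')
    have hb1a : b₁ ≠ a₀ := by
      rintro rfl
      exact Finset.disjoint_left.1 hd1 ha₀ (Finset.mem_union_left _ hb₁)
    have hcond1 : 1 ≤ I.card ∧ 2 ≤ (Iset ℓ \ I).card ∧ b₀' ∈ J ∧ b₁ ∈ J ∧ a₀ ∈ I := by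
      refine ⟨hIc, ?_, hb₀', hb₁, ha₀⟩
      rw [hSI]; exact hJKc
    -- name the three sums
    have hrel : relE R (Iset ℓ) b₀' b₁ a₀ =
        (∑ I₁ ∈ (Iset ℓ).powerset, ∑ J₁ ∈ (Iset ℓ \ I₁).powerset,
          if 1 ≤ I₁.card ∧ 2 ≤ (Iset ℓ \ I₁).card ∧ b₀' ∈ J₁ ∧ b₁ ∈ J₁ ∧ a₀ ∈ I₁
          then epsm J₁ ((Iset ℓ \ I₁) \ J₁) • reD R (Iset ℓ) I₁ J₁ ((Iset ℓ \ I₁) \ J₁) else 0)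
        - (∑ I₁ ∈ (Iset ℓ).powerset, ∑ J₁ ∈ (Iset ℓ \ I₁).powerset,
          if 1 ≤ I₁.card ∧ 2 ≤ (Iset ℓ \ I₁).card ∧ b₀' ∈ J₁ ∧ a₀ ∈ J₁ ∧ b₁ ∈ I₁
          then epsm J₁ ((Iset ℓ \ I₁) \ J₁) • reD R (Iset ℓ) I₁ J₁ ((Iset ℓ \ I₁) \ J₁) else 0)
        - ∑ I₁ ∈ (Iset ℓ).powerset, ∑ J₁ ∈ (Iset ℓ \ I₁).powerset,
          if 1 ≤ I₁.card ∧ 2 ≤ (Iset ℓ \ I₁).card ∧ b₀' ∈ I₁ ∧ b₁ ∈ J₁ ∧ a₀ ∈ (Iset ℓ \ I₁) \ J₁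
          then epsm J₁ ((Iset ℓ \ I₁) \ J₁) • reD R (Iset ℓ) I₁ J₁ ((Iset ℓ \ I₁) \ J₁) else 0 :=
      rfl
    have hsplit : (∑ I₁ ∈ (Iset ℓ).powerset, ∑ J₁ ∈ (Iset ℓ \ I₁).powerset,
          if 1 ≤ I₁.card ∧ 2 ≤ (Iset ℓ \ I₁).card ∧ b₀' ∈ J₁ ∧ b₁ ∈ J₁ ∧ a₀ ∈ I₁
          then epsm J₁ ((Iset ℓ \ I₁) \ J₁) • reD R (Iset ℓ) I₁ J₁ ((Iset ℓ \ I₁) \ J₁) else 0)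
        = (if 1 ≤ I.card ∧ 2 ≤ (Iset ℓ \ I).card ∧ b₀' ∈ J ∧ b₁ ∈ J ∧ a₀ ∈ I
          then epsm J ((Iset ℓ \ I) \ J) • reD R (Iset ℓ) I J ((Iset ℓ \ I) \ J) else 0)
          + ((∑ J₁ ∈ ((Iset ℓ \ I).powerset).erase J,
            if 1 ≤ I.card ∧ 2 ≤ (Iset ℓ \ I).card ∧ b₀' ∈ J₁ ∧ b₁ ∈ J₁ ∧ a₀ ∈ I
            then epsm J₁ ((Iset ℓ \ I) \ J₁) • reD R (Iset ℓ) I J₁ ((Iset ℓ \ I) \ J₁) else 0)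
          + ∑ I₁ ∈ ((Iset ℓ).powerset).erase I, ∑ J₁ ∈ (Iset ℓ \ I₁).powerset,
            if 1 ≤ I₁.card ∧ 2 ≤ (Iset ℓ \ I₁).card ∧ b₀' ∈ J₁ ∧ b₁ ∈ J₁ ∧ a₀ ∈ I₁
            then epsm J₁ ((Iset ℓ \ I₁) \ J₁) • reD R (Iset ℓ) I₁ J₁ ((Iset ℓ \ I₁) \ J₁) else 0) := by
      rw [← Finset.add_sum_erase _ _ hIps, ← Finset.add_sum_erase _ _ hJps, add_assoc]
    have hGt0 : GoodP R ℓ I J ∅ (reD R (Iset (ℓ+1)) Is Js Ks)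
        (if 1 ≤ I.card ∧ 2 ≤ (Iset ℓ \ I).card ∧ b₀' ∈ J ∧ b₁ ∈ J ∧ a₀ ∈ I
          then epsm J ((Iset ℓ \ I) \ J) • reD R (Iset ℓ) I J ((Iset ℓ \ I) \ J) else 0) := by
      have e : (if 1 ≤ I.card ∧ 2 ≤ (Iset ℓ \ I).card ∧ b₀' ∈ J ∧ b₁ ∈ J ∧ a₀ ∈ I
          then epsm J ((Iset ℓ \ I) \ J) • reD R (Iset ℓ) I J ((Iset ℓ \ I) \ J) else 0)
          = relE R (Iset ℓ) b₀' b₁ a₀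
          + (∑ I₁ ∈ (Iset ℓ).powerset, ∑ J₁ ∈ (Iset ℓ \ I₁).powerset,
            if 1 ≤ I₁.card ∧ 2 ≤ (Iset ℓ \ I₁).card ∧ b₀' ∈ J₁ ∧ a₀ ∈ J₁ ∧ b₁ ∈ I₁
            then epsm J₁ ((Iset ℓ \ I₁) \ J₁) • reD R (Iset ℓ) I₁ J₁ ((Iset ℓ \ I₁) \ J₁) else 0)
          + (∑ I₁ ∈ (Iset ℓ).powerset, ∑ J₁ ∈ (Iset ℓ \ I₁).powerset,
            if 1 ≤ I₁.card ∧ 2 ≤ (Iset ℓ \ I₁).card ∧ b₀' ∈ I₁ ∧ b₁ ∈ J₁ ∧ a₀ ∈ (Iset ℓ \ I₁) \ J₁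
            then epsm J₁ ((Iset ℓ \ I₁) \ J₁) • reD R (Iset ℓ) I₁ J₁ ((Iset ℓ \ I₁) \ J₁) else 0)
          - ((∑ J₁ ∈ ((Iset ℓ \ I).powerset).erase J,
            if 1 ≤ I.card ∧ 2 ≤ (Iset ℓ \ I).card ∧ b₀' ∈ J₁ ∧ b₁ ∈ J₁ ∧ a₀ ∈ I
            then epsm J₁ ((Iset ℓ \ I) \ J₁) • reD R (Iset ℓ) I J₁ ((Iset ℓ \ I) \ J₁) else 0)
          + ∑ I₁ ∈ ((Iset ℓ).powerset).erase I, ∑ J₁ ∈ (Iset ℓ \ I₁).powerset,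
            if 1 ≤ I₁.card ∧ 2 ≤ (Iset ℓ \ I₁).card ∧ b₀' ∈ J₁ ∧ b₁ ∈ J₁ ∧ a₀ ∈ I₁
            then epsm J₁ ((Iset ℓ \ I₁) \ J₁) • reD R (Iset ℓ) I₁ J₁ ((Iset ℓ \ I₁) \ J₁) else 0) := by
        rw [hrel, hsplit]
        ring
      rw [e]
      refine GoodP_sub R (GoodP_add R (GoodP_add R ?_ ?_) ?_) (GoodP_add R ?_ ?_)
      · exact good_relE_inst R hb₀S hb₁S haS hbb hba hb1a
      · -- second sum of relE
        refine GoodP_sum R ?_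
        intro I₁ hI₁
        refine GoodP_sum R ?_
        intro J₁ hJ₁
        refine good_ite_term R hd1 hd2 hU hIc hJKc hDvar
          (Finset.mem_powerset.1 hI₁) (Finset.mem_powerset.1 hJ₁) _ ?_
        rintro ⟨c1, c2, c3, c4, c5⟩
        refine ⟨⟨c1, c2⟩, ?_⟩
        rintro (⟨e1, -⟩ | ⟨e1, -⟩)
        · rw [e1] at c4
          exact Finset.disjoint_left.1 hd1 ha₀ (Finset.mem_union_left _ c4)
        · rw [e1] at c3
          simp at c3
      · -- third sum of relE
        refine GoodP_sum R ?_
        intro I₁ hI₁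
        refine GoodP_sum R ?_
        intro J₁ hJ₁
        refine good_ite_term R hd1 hd2 hU hIc hJKc hDvar
          (Finset.mem_powerset.1 hI₁) (Finset.mem_powerset.1 hJ₁) _ ?_
        rintro ⟨c1, c2, c3, c4, c5⟩
        refine ⟨⟨c1, c2⟩, ?_⟩
        intro hcor
        have hII : I₁ = I := corner_II hd1 hU (Finset.mem_powerset.1 hI₁)
          (Finset.mem_powerset.1 hJ₁) hcor
        rw [hII] at c3
        exact Finset.disjoint_left.1 hd1 c3 (Finset.mem_union_left _ hb₀')
      · -- erased J sum
        refine GoodP_sum R ?_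
        intro J₁ hJ₁
        obtain ⟨hJne', hJ₁p⟩ := Finset.mem_erase.1 hJ₁
        refine good_ite_term R hd1 hd2 hU hIc hJKc hDvar hIS
          (Finset.mem_powerset.1 hJ₁p) _ ?_
        rintro ⟨c1, c2, c3, c4, c5⟩
        refine ⟨⟨c1, c2⟩, ?_⟩
        rintro (⟨e1, -⟩ | ⟨e1, -⟩)
        · exact hJne' e1
        · rw [e1] at c3
          simp at c3
      · -- erased I sum
        refine GoodP_sum R ?_
        intro I₁ hI₁
        obtain ⟨hIne', hI₁p⟩ := Finset.mem_erase.1 hI₁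
        refine GoodP_sum R ?_
        intro J₁ hJ₁
        refine good_ite_term R hd1 hd2 hU hIc hJKc hDvar
          (Finset.mem_powerset.1 hI₁p) (Finset.mem_powerset.1 hJ₁) _ ?_
        rintro ⟨c1, c2, c3, c4, c5⟩
        refine ⟨⟨c1, c2⟩, ?_⟩
        intro hcor
        exact hIne' (corner_II hd1 hU (Finset.mem_powerset.1 hI₁p)
          (Finset.mem_powerset.1 hJ₁) hcor)
    rw [if_pos hcond1, hSIJ] at hGt0
    have h2 := GoodP_zsmul R (epsm J ∅) hGt0
    rwa [epsm_smul_epsm_smul] at h2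
  · -- K nonempty : the corner sits in the third sum of `relE (Iset ℓ) a₀ b₀ k₀`
    have hkS : k₀ ∈ Iset ℓ := hKS hk₀
    have hab : a₀ ≠ b₀ := by
      rintro rfl
      exact Finset.disjoint_left.1 hd1 ha₀ (Finset.mem_union_left _ hb₀)
    have hak : a₀ ≠ k₀ := by
      rintro rfl
      exact Finset.disjoint_left.1 hd1 ha₀ (Finset.mem_union_right _ hk₀)
    have hbk : b₀ ≠ k₀ := by
      rintro rfl
      exact Finset.disjoint_left.1 hd2 hb₀ hk₀
    have hcond3 : 1 ≤ I.card ∧ 2 ≤ (Iset ℓ \ I).card ∧ a₀ ∈ I ∧ b₀ ∈ J ∧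
        k₀ ∈ (Iset ℓ \ I) \ J := by
      refine ⟨hIc, ?_, ha₀, hb₀, ?_⟩
      · rw [hSI]; exact hJKc
      · rw [hSIJ]; exact hk₀
    have hrel : relE R (Iset ℓ) a₀ b₀ k₀ =
        (∑ I₁ ∈ (Iset ℓ).powerset, ∑ J₁ ∈ (Iset ℓ \ I₁).powerset,
          if 1 ≤ I₁.card ∧ 2 ≤ (Iset ℓ \ I₁).card ∧ a₀ ∈ J₁ ∧ b₀ ∈ J₁ ∧ k₀ ∈ I₁
          then epsm J₁ ((Iset ℓ \ I₁) \ J₁) • reD R (Iset ℓ) I₁ J₁ ((Iset ℓ \ I₁) \ J₁) else 0)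
        - (∑ I₁ ∈ (Iset ℓ).powerset, ∑ J₁ ∈ (Iset ℓ \ I₁).powerset,
          if 1 ≤ I₁.card ∧ 2 ≤ (Iset ℓ \ I₁).card ∧ a₀ ∈ J₁ ∧ k₀ ∈ J₁ ∧ b₀ ∈ I₁
          then epsm J₁ ((Iset ℓ \ I₁) \ J₁) • reD R (Iset ℓ) I₁ J₁ ((Iset ℓ \ I₁) \ J₁) else 0)
        - ∑ I₁ ∈ (Iset ℓ).powerset, ∑ J₁ ∈ (Iset ℓ \ I₁).powerset,
          if 1 ≤ I₁.card ∧ 2 ≤ (Iset ℓ \ I₁).card ∧ a₀ ∈ I₁ ∧ b₀ ∈ J₁ ∧ k₀ ∈ (Iset ℓ \ I₁) \ J₁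
          then epsm J₁ ((Iset ℓ \ I₁) \ J₁) • reD R (Iset ℓ) I₁ J₁ ((Iset ℓ \ I₁) \ J₁) else 0 :=
      rfl
    have hsplit : (∑ I₁ ∈ (Iset ℓ).powerset, ∑ J₁ ∈ (Iset ℓ \ I₁).powerset,
          if 1 ≤ I₁.card ∧ 2 ≤ (Iset ℓ \ I₁).card ∧ a₀ ∈ I₁ ∧ b₀ ∈ J₁ ∧ k₀ ∈ (Iset ℓ \ I₁) \ J₁
          then epsm J₁ ((Iset ℓ \ I₁) \ J₁) • reD R (Iset ℓ) I₁ J₁ ((Iset ℓ \ I₁) \ J₁) else 0)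
        = (if 1 ≤ I.card ∧ 2 ≤ (Iset ℓ \ I).card ∧ a₀ ∈ I ∧ b₀ ∈ J ∧ k₀ ∈ (Iset ℓ \ I) \ J
          then epsm J ((Iset ℓ \ I) \ J) • reD R (Iset ℓ) I J ((Iset ℓ \ I) \ J) else 0)
          + ((∑ J₁ ∈ ((Iset ℓ \ I).powerset).erase J,
            if 1 ≤ I.card ∧ 2 ≤ (Iset ℓ \ I).card ∧ a₀ ∈ I ∧ b₀ ∈ J₁ ∧ k₀ ∈ (Iset ℓ \ I) \ J₁
            then epsm J₁ ((Iset ℓ \ I) \ J₁) • reD R (Iset ℓ) I J₁ ((Iset ℓ \ I) \ J₁) else 0)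
          + ∑ I₁ ∈ ((Iset ℓ).powerset).erase I, ∑ J₁ ∈ (Iset ℓ \ I₁).powerset,
            if 1 ≤ I₁.card ∧ 2 ≤ (Iset ℓ \ I₁).card ∧ a₀ ∈ I₁ ∧ b₀ ∈ J₁ ∧ k₀ ∈ (Iset ℓ \ I₁) \ J₁
            then epsm J₁ ((Iset ℓ \ I₁) \ J₁) • reD R (Iset ℓ) I₁ J₁ ((Iset ℓ \ I₁) \ J₁) else 0) := by
      rw [← Finset.add_sum_erase _ _ hIps, ← Finset.add_sum_erase _ _ hJps, add_assoc]
    have hGt0 : GoodP R ℓ I J K (reD R (Iset (ℓ+1)) Is Js Ks)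
        (if 1 ≤ I.card ∧ 2 ≤ (Iset ℓ \ I).card ∧ a₀ ∈ I ∧ b₀ ∈ J ∧ k₀ ∈ (Iset ℓ \ I) \ J
          then epsm J ((Iset ℓ \ I) \ J) • reD R (Iset ℓ) I J ((Iset ℓ \ I) \ J) else 0) := by
      have e : (if 1 ≤ I.card ∧ 2 ≤ (Iset ℓ \ I).card ∧ a₀ ∈ I ∧ b₀ ∈ J ∧ k₀ ∈ (Iset ℓ \ I) \ J
          then epsm J ((Iset ℓ \ I) \ J) • reD R (Iset ℓ) I J ((Iset ℓ \ I) \ J) else 0)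
          = (∑ I₁ ∈ (Iset ℓ).powerset, ∑ J₁ ∈ (Iset ℓ \ I₁).powerset,
            if 1 ≤ I₁.card ∧ 2 ≤ (Iset ℓ \ I₁).card ∧ a₀ ∈ J₁ ∧ b₀ ∈ J₁ ∧ k₀ ∈ I₁
            then epsm J₁ ((Iset ℓ \ I₁) \ J₁) • reD R (Iset ℓ) I₁ J₁ ((Iset ℓ \ I₁) \ J₁) else 0)
          - (∑ I₁ ∈ (Iset ℓ).powerset, ∑ J₁ ∈ (Iset ℓ \ I₁).powerset,
            if 1 ≤ I₁.card ∧ 2 ≤ (Iset ℓ \ I₁).card ∧ a₀ ∈ J₁ ∧ k₀ ∈ J₁ ∧ b₀ ∈ I₁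
            then epsm J₁ ((Iset ℓ \ I₁) \ J₁) • reD R (Iset ℓ) I₁ J₁ ((Iset ℓ \ I₁) \ J₁) else 0)
          - ((∑ J₁ ∈ ((Iset ℓ \ I).powerset).erase J,
            if 1 ≤ I.card ∧ 2 ≤ (Iset ℓ \ I).card ∧ a₀ ∈ I ∧ b₀ ∈ J₁ ∧ k₀ ∈ (Iset ℓ \ I) \ J₁
            then epsm J₁ ((Iset ℓ \ I) \ J₁) • reD R (Iset ℓ) I J₁ ((Iset ℓ \ I) \ J₁) else 0)
          + ∑ I₁ ∈ ((Iset ℓ).powerset).erase I, ∑ J₁ ∈ (Iset ℓ \ I₁).powerset,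
            if 1 ≤ I₁.card ∧ 2 ≤ (Iset ℓ \ I₁).card ∧ a₀ ∈ I₁ ∧ b₀ ∈ J₁ ∧ k₀ ∈ (Iset ℓ \ I₁) \ J₁
            then epsm J₁ ((Iset ℓ \ I₁) \ J₁) • reD R (Iset ℓ) I₁ J₁ ((Iset ℓ \ I₁) \ J₁) else 0)
          - relE R (Iset ℓ) a₀ b₀ k₀ := by
        rw [hrel, hsplit]
        ring
      rw [e]
      refine GoodP_sub R (GoodP_sub R (GoodP_sub R ?_ ?_) (GoodP_add R ?_ ?_)) ?_
      · -- first sum of relE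
        refine GoodP_sum R ?_
        intro I₁ hI₁
        refine GoodP_sum R ?_
        intro J₁ hJ₁
        refine good_ite_term R hd1 hd2 hU hIc hJKc hDvar
          (Finset.mem_powerset.1 hI₁) (Finset.mem_powerset.1 hJ₁) _ ?_
        rintro ⟨c1, c2, c3, c4, c5⟩
        refine ⟨⟨c1, c2⟩, ?_⟩
        rintro (⟨e1, -⟩ | ⟨e1, -⟩)
        · rw [e1] at c3
          exact Finset.disjoint_left.1 hd1 ha₀ (Finset.mem_union_left _ c3)
        · rw [e1] at c3
          exact Finset.disjoint_left.1 hd1 ha₀ (Finset.mem_union_right _ c3)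
      · -- second sum of relE
        refine GoodP_sum R ?_
        intro I₁ hI₁
        refine GoodP_sum R ?_
        intro J₁ hJ₁
        refine good_ite_term R hd1 hd2 hU hIc hJKc hDvar
          (Finset.mem_powerset.1 hI₁) (Finset.mem_powerset.1 hJ₁) _ ?_
        rintro ⟨c1, c2, c3, c4, c5⟩
        refine ⟨⟨c1, c2⟩, ?_⟩
        rintro (⟨e1, -⟩ | ⟨e1, -⟩)
        · rw [e1] at c3
          exact Finset.disjoint_left.1 hd1 ha₀ (Finset.mem_union_left _ c3)
        · rw [e1] at c3
          exact Finset.disjoint_left.1 hd1 ha₀ (Finset.mem_union_right _ c3)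
      · -- erased J sum
        refine GoodP_sum R ?_
        intro J₁ hJ₁
        obtain ⟨hJne', hJ₁p⟩ := Finset.mem_erase.1 hJ₁
        refine good_ite_term R hd1 hd2 hU hIc hJKc hDvar hIS
          (Finset.mem_powerset.1 hJ₁p) _ ?_
        rintro ⟨c1, c2, c3, c4, c5⟩
        refine ⟨⟨c1, c2⟩, ?_⟩
        rintro (⟨e1, -⟩ | ⟨e1, -⟩)
        · exact hJne' e1
        · rw [e1] at c4
          exact Finset.disjoint_left.1 hd2 hb₀ c4
      · -- erased I sum
        refine GoodP_sum R ?_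
        intro I₁ hI₁
        obtain ⟨hIne', hI₁p⟩ := Finset.mem_erase.1 hI₁
        refine GoodP_sum R ?_
        intro J₁ hJ₁
        refine good_ite_term R hd1 hd2 hU hIc hJKc hDvar
          (Finset.mem_powerset.1 hI₁p) (Finset.mem_powerset.1 hJ₁) _ ?_
        rintro ⟨c1, c2, c3, c4, c5⟩
        refine ⟨⟨c1, c2⟩, ?_⟩
        intro hcor
        exact hIne' (corner_II hd1 hU (Finset.mem_powerset.1 hI₁p)
          (Finset.mem_powerset.1 hJ₁) hcor)
      · exact good_relE_inst R haS hbS hkS hab hak hbk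
    rw [if_pos hcond3, hSIJ] at hGt0
    have h2 := GoodP_zsmul R (epsm J K) hGt0
    rwa [epsm_smul_epsm_smul] at h2

end Corner

/-! #### Final assembly -/

section Final

variable {ℓ : ℕ} {I J K Is Js Ks : Finset ℕ}
variable (hd1 : Disjoint I (J ∪ K)) (hd2 : Disjoint J K) (hU : I ∪ (J ∪ K) = Iset ℓ)
  (hIc : 1 ≤ I.card) (hJKc : 2 ≤ (J ∪ K).card) (hminJ : J.min = (J ∪ K).min)
  (hDvar : DVar ℓ I J K Is Js Ks)

include hd1 hd2 hU hIc hJKc hminJ hDvar in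
lemma goodD_reD_all {C A B : Finset ℕ} (h1 : Disjoint C (A ∪ B)) (h2 : Disjoint A B)
    (h3 : C ∪ (A ∪ B) = Iset ℓ) (hCc : 1 ≤ C.card) (hABc : 2 ≤ (A ∪ B).card) :
    GoodP R ℓ I J K (reD R (Iset (ℓ+1)) Is Js Ks) (reD R (Iset ℓ) C A B) := by
  by_cases hnc : (A = J ∧ B = K) ∨ (A = K ∧ B = J)
  · have hABJK : A ∪ B = J ∪ K := by
      rcases hnc with ⟨rfl, rfl⟩ | ⟨rfl, rfl⟩
      · rfl
      · exact Finset.union_comm _ _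
    have hCI : C = I := by
      calc C = (C ∪ (A ∪ B)) \ (A ∪ B) := (Finset.union_sdiff_cancel_right h1).symm
      _ = (I ∪ (J ∪ K)) \ (J ∪ K) := by rw [h3, ← hU, hABJK]
      _ = I := Finset.union_sdiff_cancel_right hd1
    rcases hnc with ⟨rfl, rfl⟩ | ⟨rfl, rfl⟩
    · rw [hCI]
      exact goodD_corner R hd1 hd2 hU hIc hJKc hminJ hDvar
    · rw [hCI, reD_symm R (Iset ℓ) I A B]
      exact goodD_corner R hd1 hd2 hU hIc hJKc hminJ hDvar
  · exact goodD_reD_base R hd1 hd2 hU hIc hJKc hDvar h1 h2 h3 hCc hABc hnc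

include hd1 hd2 hU hIc hJKc hminJ hDvar in
lemma good_all (p : RRing R (Iset ℓ)) :
    GoodP R ℓ I J K (reD R (Iset (ℓ+1)) Is Js Ks) p := by
  induction p using MvPolynomial.induction_on with
  | C r => exact GoodP_C R r
  | add p q hp hq => exact GoodP_add R hp hq
  | mul_X p ix hp =>
      refine GoodP_mul R hp ?_
      rcases ix with e | d
      · rw [X_as_reE R e]
        exact goodD_reE R hd1 hd2 hU hIc hJKc hDvar Finset.disjoint_sdiff
          (Finset.union_sdiff_of_subset e.2.1)
      · rw [X_as_reD R d]
        have hu2 : d.1.2 ∪ ((Iset ℓ \ d.1.1) \ d.1.2) = Iset ℓ \ d.1.1 :=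
          Finset.union_sdiff_of_subset d.2.2.1
        refine goodD_reD_all R hd1 hd2 hU hIc hJKc hminJ hDvar ?_
          Finset.disjoint_sdiff ?_ d.2.2.2.1 ?_
        · rw [hu2]; exact Finset.disjoint_sdiff
        · rw [hu2, Finset.union_sdiff_of_subset d.2.1]
        · rw [hu2]; exact d.2.2.2.2.1

end Final


end Stmt14Aux


/-- `ℝD̃^∘_{I;J,K}·(Im F) ⊆ ℝD̃^∘_{I;J,K}·(Im (F ∘ F_{I;J,K})) + I_{0,[ℓ+1]}`. -/
theorem stmt14 (R : Type) [CommRing R] (ℓ : ℕ) (hℓ : 2 ≤ ℓ) (I J K : Finset ℕ)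
    (hIJK : validD (Iset ℓ) I J K) (hmin : J.min = (J ∪ K).min)
    (D : RRing R (Iset (ℓ + 1))) (hD : D = reDt0 R ℓ I J K ∨ D = reDtm R ℓ I J K) :
    ∀ p : RRing R (Iset ℓ),
      ∃ q : TensorProduct R (RRing R (insert (ndOf I) I)) (CxRing R (insert 0 (J ∪ K))),
        D * (Fre R ℓ p - Fre R ℓ (FIJK R ℓ I J K q)) ∈ reIdeal R (Iset (ℓ + 1)) := by
  intro p
  obtain ⟨hd1, hd2, hU, hIc, hJKc⟩ := hIJK
  have hDex : ∃ Is Js Ks, Stmt14Aux.DVar ℓ I J K Is Js Ks ∧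
      D = reD R (Iset (ℓ+1)) Is Js Ks := by
    rcases hD with hD | hD
    · by_cases h1I : 1 ∈ I
      · exact ⟨I, J ∪ {ℓ+1}, K, Or.inr (Or.inr ⟨rfl, rfl, rfl⟩),
          by rw [hD, reDt0, if_pos h1I]⟩
      · exact ⟨I ∪ {ℓ+1}, J, K, Or.inr (Or.inl ⟨rfl, rfl, rfl⟩),
          by rw [hD, reDt0, if_neg h1I]⟩
    · exact ⟨I, J, K ∪ {ℓ+1}, Or.inl ⟨rfl, rfl, rfl⟩, by rw [hD, reDtm]⟩
  obtain ⟨Is, Js, Ks, hDvar, rfl⟩ := hDex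
  exact Stmt14Aux.good_all R hd1 hd2 hU hIc hJKc hmin hDvar p

end
end

section
/- Define rational numbers h^p_ℓ for integers ℓ≥3 and p∈ℤ by: h^p_ℓ=0 for p<0; h^p_3=1 if p=0 and h^p_3=0 otherwise; and h^p_{ℓ+1} = h^p_ℓ + h^{p−2}_ℓ + (1/2)·Σ_{j=2}^{ℓ−2} C(ℓ,j)·Σ_{q=0}^{p−2} h^q_{j+1}·h^{p−2−q}_{ℓ−j+1}. Define rational numbers h^p_{0,ℓ} for integers ℓ≥2 and p∈ℤ by: h^p_{0,ℓ}=0 for p<0; h^p_{0,2}=1 if p∈{0,1} and h^p_{0,2}=0 otherwise; and h^p_{0,ℓ+1} = h^p_{0,ℓ} + h^{p−2}_{0,ℓ} + 2^{ℓ−1}·(h^{p−1}_{ℓ+1} + h^{p−2}_{ℓ+1}) + Σ_{i=1}^{ℓ−2} 2^{ℓ−i}·C(ℓ,i)·Σ_{q=0}^{p−2} h^q_{0,i+1}·h^{p−2−q}_{ℓ−i+1}. Then h^1_{0,ℓ} = 2^{ℓ−1} − 1 for every integer ℓ≥2. -/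
open MvPolynomial Finset TensorProduct

noncomputable section

/-- For the families `(h^p_ℓ)` and `(h^p_{0,ℓ})` defined by the recursions
`ChomolRec_e` and `RhomolRec_e`, one has `h^1_{0,ℓ} = 2^{ℓ-1} − 1` for every `ℓ ≥ 2`. -/
theorem stmt17 (h h0 : ℕ → ℤ → ℚ)
    (hneg : ∀ (ℓ : ℕ) (p : ℤ), p < 0 → h ℓ p = 0)
    (hbase : ∀ p : ℤ, h 3 p = if p = 0 then 1 else 0)
    (hrec : ∀ ℓ : ℕ, 3 ≤ ℓ → ∀ p : ℤ,
      h (ℓ + 1) p = h ℓ p + h ℓ (p - 2) +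
        (1 / 2) * ∑ j ∈ Finset.Icc 2 (ℓ - 2), (ℓ.choose j : ℚ) *
          ∑ q ∈ Finset.Icc (0 : ℤ) (p - 2), h (j + 1) q * h (ℓ - j + 1) (p - 2 - q))
    (h0neg : ∀ (ℓ : ℕ) (p : ℤ), p < 0 → h0 ℓ p = 0)
    (h0base : ∀ p : ℤ, h0 2 p = if p = 0 ∨ p = 1 then 1 else 0)
    (h0rec : ∀ ℓ : ℕ, 2 ≤ ℓ → ∀ p : ℤ,
      h0 (ℓ + 1) p = h0 ℓ p + h0 ℓ (p - 2) +
        2 ^ (ℓ - 1) * (h (ℓ + 1) (p - 1) + h (ℓ + 1) (p - 2)) +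
        ∑ i ∈ Finset.Icc 1 (ℓ - 2), 2 ^ (ℓ - i) * (ℓ.choose i : ℚ) *
          ∑ q ∈ Finset.Icc (0 : ℤ) (p - 2), h0 (i + 1) q * h (ℓ - i + 1) (p - 2 - q)) :
    ∀ ℓ : ℕ, 2 ≤ ℓ → h0 ℓ 1 = 2 ^ (ℓ - 1) - 1 := by
  have hzero : ∀ ℓ : ℕ, 3 ≤ ℓ → h ℓ 0 = 1 := by
    intro ℓ hℓ
    induction ℓ, hℓ using Nat.le_induction with
    | base => simp [hbase]
    | succ n hn ih =>
      rw [hrec n hn 0]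
      have hs : Finset.Icc (0 : ℤ) (0 - 2) = ∅ := by
        apply Finset.Icc_eq_empty; norm_num
      simp [hs, hneg n (-2) (by norm_num), ih]
  intro ℓ hℓ
  induction ℓ, hℓ using Nat.le_induction with
  | base => norm_num [h0base]
  | succ n hn ih =>
    rw [h0rec n hn 1]
    have hs : Finset.Icc (0 : ℤ) (1 - 2) = ∅ := by
      apply Finset.Icc_eq_empty; norm_num
    rw [ih]
    have h1 : h (n + 1) (1 - 1) = 1 := by
      norm_num [hzero (n + 1) (by omega)]
    rw [h1, h0neg n (1 - 2) (by norm_num), hneg (n + 1) (1 - 2) (by norm_num)]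
    simp only [hs, Finset.sum_empty, mul_zero, Finset.sum_const_zero]
    have : n + 1 - 1 = (n - 1) + 1 := by omega
    rw [this, pow_succ]
    ring

end
end
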